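/- arXiv:2308.05277 — 4 statements merged into one kernel-verified Lean document; each statement's English description precedes it below -/
import Mathlib

section
/- Let H be a graph with a partition of V(H) into classes ρ₁, ρ₂, ρ₃ whose only monochromatic edge is xy with x, y ∈ ρ₁, and suppose some connected component of H − ρ₁ contains both a vertex of an odd cycle of H − ρ₃ and a vertex of an odd cycle of H − ρ₂. Then H contains a K_4 minor. -/
open SimpleGraph

def HasK4Minor {V : Type*} (G : SimpleGraph V) : Prop :=
  ∃ H : Fin 4 → G.Subgraph,
    (∀ i, (H i).verts.Nonempty) ∧
    (∀ i, (H i).Connected) ∧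
    (∀ i j, i ≠ j → Disjoint (H i).verts (H j).verts) ∧
    (∀ i j, i ≠ j → ∃ a ∈ (H i).verts, ∃ b ∈ (H j).verts, G.Adj a b)

namespace K4Helpers

variable {V : Type*} {H : SimpleGraph V}

lemma parity_walk (g : V → ZMod 2) {u v : V} (w : H.Walk u v)
    (h : ∀ p q : V, s(p,q) ∈ w.edges → g p ≠ g q) :
    (w.length : ZMod 2) = g v - g u := by
  induction w with
  | nil => simp
  | @cons u m v hadj t ih =>
    have h1 : g u ≠ g m := h u m (by simp [Walk.edges_cons])
    have h2 := ih (fun p q hp => h p q (by simp [Walk.edges_cons, hp]))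
    have h3 : (g m - g u) = 1 := by
      revert h1; generalize g u = s; generalize g m = t; revert s t; decide
    push_cast [Walk.length_cons]
    rw [h2, ← h3]; ring

lemma firstHit [DecidableEq V] {u v : V} (w : H.Walk u v) (S : Set V)
    (hv : ∃ t ∈ w.support, t ∈ S) :
    ∃ (z : V) (w1 : H.Walk u z) (w2 : H.Walk z v), z ∈ S ∧
      (∀ t ∈ w1.support, t ∈ S → t = z) ∧ w1.support.count z = 1 ∧
      w1.append w2 = w := by
  induction w with
  | nil =>
    obtain ⟨t, ht, htS⟩ := hv
    simp only [Walk.support_nil, List.mem_singleton] at ht; subst ht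
    exact ⟨t, .nil, .nil, htS, by simp, by simp, rfl⟩
  | @cons u m v hadj t ih =>
    by_cases hu : u ∈ S
    · exact ⟨u, .nil, .cons hadj t, hu, by simp, by simp, rfl⟩
    · have hv' : ∃ s ∈ t.support, s ∈ S := by
        obtain ⟨s, hs, hsS⟩ := hv
        rcases (by simpa [Walk.support_cons] using hs : s = u ∨ s ∈ t.support) with rfl | h
        · exact absurd hsS hu
        · exact ⟨s, h, hsS⟩
      obtain ⟨z, w1, w2, hzS, hprop, hcnt, happ⟩ := ih hv'
      have huz : z ≠ u := fun he => hu (he ▸ hzS)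
      refine ⟨z, .cons hadj w1, w2, hzS, ?_, ?_, by rw [Walk.cons_append, happ]⟩
      · intro s hs hsS
        rcases (by simpa [Walk.support_cons] using hs : s = u ∨ s ∈ w1.support) with rfl | h
        · exact absurd hsS hu
        · exact hprop s h hsS
      · rw [Walk.support_cons, List.count_cons_of_ne huz.symm, hcnt]

lemma dropFirst {u v : V} (w : H.Walk u v) (hw : ¬w.Nil) :
    ∃ (c : V) (_ : H.Adj u c) (w' : H.Walk c v), w.support = u :: w'.support := by
  cases w with
  | nil => exact absurd Walk.Nil.nil hw
  | cons hadj t => exact ⟨_, hadj, t, by simp [Walk.support_cons]⟩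

lemma dropLast {u v : V} (w : H.Walk u v) (hw : ¬w.Nil) :
    ∃ (c : V) (_ : H.Adj c v) (w' : H.Walk u c), w.support = w'.support ++ [v] := by
  induction w with
  | nil => exact absurd Walk.Nil.nil hw
  | @cons u m v hadj t ih =>
    by_cases hnt : t.Nil
    · have hmv : m = v := hnt.eq
      subst hmv
      exact ⟨u, hadj, .nil, by simp [Walk.support_cons, Walk.nil_iff_support_eq.mp hnt]⟩
    · obtain ⟨c, hcv, w', hsup⟩ := ih hnt
      exact ⟨c, hcv, .cons hadj w', by simp [Walk.support_cons, hsup]⟩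

lemma cycle_count [DecidableEq V] {u : V} (c : H.Walk u u) (hc : c.IsCycle) :
    c.support.count u = 2 ∧ ∀ v ∈ c.support, v ≠ u → c.support.count v = 1 := by
  have hnd : c.support.tail.Nodup := hc.support_nodup
  obtain ⟨c0, hadj, t, hsup⟩ := dropFirst c hc.not_nil
  have htail : c.support.tail = t.support := by rw [hsup, List.tail_cons]
  constructor
  · rw [hsup, List.count_cons_self]
    have h1 : t.support.count u = 1 :=
      List.count_eq_one_of_mem (htail ▸ hnd) t.end_mem_support
    omega
  · intro v hv hne
    have hvt : v ∈ c.support.tail := by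
      rw [Walk.support_eq_cons c] at hv
      rcases List.mem_cons.mp hv with rfl | h
      · exact absurd rfl hne
      · exact h
    have h1 : c.support.tail.count v = 1 := List.count_eq_one_of_mem hnd hvt
    rw [Walk.support_eq_cons c, List.count_cons_of_ne hne.symm, h1]

lemma mem_rotate [DecidableEq V] {u z : V} (c : H.Walk u u) (h : z ∈ c.support) {v : V} :
    v ∈ (c.rotate z h).support ↔ v ∈ c.support := by
  unfold Walk.rotate
  rw [Walk.mem_support_append_iff]
  conv_rhs => rw [← Walk.take_spec c h, Walk.mem_support_append_iff]
  tauto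



lemma buildK4 [DecidableEq V] {α β p q : V}
    (A A' E : H.Walk α β) (Wseg : H.Walk p q)
    (hab : α ≠ β) (hpa : p ≠ α) (hpb : p ≠ β) (hqa : q ≠ α) (hqb : q ≠ β) (hpq : p ≠ q)
    (hpA : p ∈ A.support) (hqE : q ∈ E.support)
    (hAA' : ∀ v, v ∈ A.support → v ∈ A'.support → v = α ∨ v = β)
    (hAE : ∀ v, v ∈ A.support → v ∈ E.support → v = α ∨ v = β)
    (hA'E : ∀ v, v ∈ A'.support → v ∈ E.support → v = α ∨ v = β)
    (hW : ∀ v, v ∈ Wseg.support → (v ∈ A.support ∨ v ∈ A'.support ∨ v ∈ E.support) →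
      v = p ∨ v = q)
    (hWq : Wseg.support.count q = 1)
    (hAa : A.support.count α = 1) (hAb : A.support.count β = 1)
    (hA'b : A'.support.count β = 1)
    (hEa : E.support.count α = 1) (hEb : E.support.count β = 1) :
    HasK4Minor H := by
  -- decompose A' : drop its last vertex β
  obtain ⟨c1, hadj1, B1w, hsA'⟩ := dropLast A' (Walk.not_nil_of_ne hab)
  have hbB1 : β ∉ B1w.support := by
    have h1 : A'.support.count β = B1w.support.count β + 1 := by simp [hsA']
    rw [hA'b] at h1
    exact List.count_eq_zero.mp (by omega)
  -- decompose A : A.support = α :: Ã.support ++ [β]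
  obtain ⟨a1, hadjA, A1, hsA1⟩ := dropFirst A (Walk.not_nil_of_ne hab)
  have hpA1 : p ∈ A1.support := by
    rw [hsA1] at hpA
    rcases List.mem_cons.mp hpA with rfl | h
    · exact absurd rfl hpa
    · exact h
  have hA1nn : ¬A1.Nil := by
    intro hn
    have hs := Walk.nil_iff_support_eq.mp hn
    rw [hs] at hpA1
    have hbm : β ∈ A1.support := A1.end_mem_support
    rw [hs] at hbm
    simp only [List.mem_singleton] at hpA1 hbm
    exact hpb (hpA1.trans hbm.symm)
  obtain ⟨c3, hadj3, At, hsA2⟩ := dropLast A1 hA1nn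
  have hsA : A.support = α :: (At.support ++ [β]) := by rw [hsA1, hsA2]
  have haAt : α ∉ At.support := by
    have h2 : A.support.count α = 1 + ((At.support).count α + [β].count α) := by
      rw [hsA, List.count_cons_self, List.count_append]; ring
    rw [hAa] at h2
    have : [β].count α = 0 := by simp [List.count_singleton]; exact fun h => hab h.symm
    rw [this] at h2
    exact List.count_eq_zero.mp (by omega)
  have hbAt : β ∉ At.support := by
    have h2 : A.support.count β = (At.support).count β + 1 := by
      rw [hsA, List.count_cons_of_ne hab, List.count_append]; simp
    rw [hAb] at h2
    exact List.count_eq_zero.mp (by omega)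
  have hpAt : p ∈ At.support := by
    rw [hsA2] at hpA1
    rcases List.mem_append.mp hpA1 with h | h
    · exact h
    · simp only [List.mem_singleton] at h; exact absurd h hpb
  -- decompose E similarly
  obtain ⟨e1, hadjE1, Ew1, hsE1⟩ := dropFirst E (Walk.not_nil_of_ne hab)
  have hqE1 : q ∈ Ew1.support := by
    rw [hsE1] at hqE
    rcases List.mem_cons.mp hqE with rfl | h
    · exact absurd rfl hqa
    · exact h
  have hE1nn : ¬Ew1.Nil := by
    intro hn
    have hs := Walk.nil_iff_support_eq.mp hn
    rw [hs] at hqE1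
    have hbm : β ∈ Ew1.support := Ew1.end_mem_support
    rw [hs] at hbm
    simp only [List.mem_singleton] at hqE1 hbm
    exact hqb (hqE1.trans hbm.symm)
  obtain ⟨e2, hadjE2, Et, hsE2⟩ := dropLast Ew1 hE1nn
  have hsE : E.support = α :: (Et.support ++ [β]) := by rw [hsE1, hsE2]
  have haEt : α ∉ Et.support := by
    have h2 : E.support.count α = 1 + ((Et.support).count α + [β].count α) := by
      rw [hsE, List.count_cons_self, List.count_append]; ring
    rw [hEa] at h2
    have : [β].count α = 0 := by simp [List.count_singleton]; exact fun h => hab h.symm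
    rw [this] at h2
    exact List.count_eq_zero.mp (by omega)
  have hbEt : β ∉ Et.support := by
    have h2 : E.support.count β = (Et.support).count β + 1 := by
      rw [hsE, List.count_cons_of_ne hab, List.count_append]; simp
    rw [hEb] at h2
    exact List.count_eq_zero.mp (by omega)
  have hqEt : q ∈ Et.support := by
    rw [hsE2] at hqE1
    rcases List.mem_append.mp hqE1 with h | h
    · exact h
    · simp only [List.mem_singleton] at h; exact absurd h hqb
  -- decompose Wseg : drop last vertex q
  obtain ⟨c4, hadj4, Wt, hsW⟩ := dropLast Wseg (Walk.not_nil_of_ne hpq)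
  have hqWt : q ∉ Wt.support := by
    have h2 : Wseg.support.count q = (Wt.support).count q + 1 := by
      rw [hsW, List.count_append]; simp
    rw [hWq] at h2
    exact List.count_eq_zero.mp (by omega)
  have hWtsub : ∀ v ∈ Wt.support, v ∈ Wseg.support := by
    intro v hv; rw [hsW]; exact List.mem_append_left _ hv
  -- the connector walk B3w
  let B3w : H.Walk a1 c3 :=
    ((At.takeUntil p hpAt).append (Wt.append Wt.reverse)).append (At.dropUntil p hpAt)
  have hB3 : ∀ v, v ∈ B3w.support ↔ (v ∈ At.support ∨ v ∈ Wt.support) := by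
    intro v
    have hAt : v ∈ At.support ↔
        v ∈ (At.takeUntil p hpAt).support ∨ v ∈ (At.dropUntil p hpAt).support := by
      have hts := Walk.take_spec At hpAt
      conv_lhs => rw [← hts]
      rw [Walk.mem_support_append_iff]
    simp only [B3w, Walk.mem_support_append_iff, Walk.support_reverse, List.mem_reverse]
    rw [hAt]; tauto
  -- facts about the four vertex sets
  have fB1 : ∀ v ∈ B1w.support, v ∈ A'.support ∧ v ≠ β := by
    intro v hv
    refine ⟨by rw [hsA']; exact List.mem_append_left _ hv, fun h => hbB1 (h ▸ hv)⟩
  have fAt : ∀ v ∈ At.support, v ∈ A.support ∧ v ≠ α ∧ v ≠ β := by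
    intro v hv
    refine ⟨by rw [hsA]; exact List.mem_cons_of_mem _ (List.mem_append_left _ hv),
      fun h => haAt (h ▸ hv), fun h => hbAt (h ▸ hv)⟩
  have fEt : ∀ v ∈ Et.support, v ∈ E.support ∧ v ≠ α ∧ v ≠ β := by
    intro v hv
    refine ⟨by rw [hsE]; exact List.mem_cons_of_mem _ (List.mem_append_left _ hv),
      fun h => haEt (h ▸ hv), fun h => hbEt (h ▸ hv)⟩
  have fWt : ∀ v ∈ Wt.support, v ∈ Wseg.support ∧ v ≠ q := by
    intro v hv
    exact ⟨hWtsub v hv, fun h => hqWt (h ▸ hv)⟩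
  -- the four subgraphs
  refine ⟨![B1w.toSubgraph, (Walk.nil' β : H.Walk β β).toSubgraph, B3w.toSubgraph,
      Et.toSubgraph], ?_, ?_, ?_, ?_⟩
  · intro i
    fin_cases i <;> exact ⟨_, Walk.start_mem_verts_toSubgraph _⟩
  · intro i
    fin_cases i <;> exact Walk.toSubgraph_connected _
  · -- disjointness
    have d12 : Disjoint B1w.toSubgraph.verts ((Walk.nil' β : H.Walk β β)).toSubgraph.verts := by
      rw [Set.disjoint_left]
      intro v hv1 hv2
      rw [Walk.mem_verts_toSubgraph] at hv1 hv2
      simp only [Walk.support_nil, List.mem_singleton] at hv2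
      exact (fB1 v hv1).2 hv2
    have d13 : Disjoint B1w.toSubgraph.verts B3w.toSubgraph.verts := by
      rw [Set.disjoint_left]
      intro v hv1 hv3
      rw [Walk.mem_verts_toSubgraph] at hv1 hv3
      obtain ⟨hvA', hvb⟩ := fB1 v hv1
      rcases (hB3 v).mp hv3 with h | h
      · obtain ⟨hvA, hva, hvb'⟩ := fAt v h
        rcases hAA' v hvA hvA' with rfl | rfl
        · exact hva rfl
        · exact hvb rfl
      · obtain ⟨hvW, hvq⟩ := fWt v h
        rcases hW v hvW (Or.inr (Or.inl hvA')) with h' | h'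
        · rw [h'] at hvA'
          rcases hAA' p hpA hvA' with h'' | h''
          · exact hpa h''
          · exact hpb h''
        · exact hvq h'
    have d14 : Disjoint B1w.toSubgraph.verts Et.toSubgraph.verts := by
      rw [Set.disjoint_left]
      intro v hv1 hv4
      rw [Walk.mem_verts_toSubgraph] at hv1 hv4
      obtain ⟨hvA', hvb⟩ := fB1 v hv1
      obtain ⟨hvE, hva, hvb'⟩ := fEt v hv4
      rcases hA'E v hvA' hvE with rfl | rfl
      · exact hva rfl
      · exact hvb rfl
    have d23 : Disjoint ((Walk.nil' β : H.Walk β β)).toSubgraph.verts B3w.toSubgraph.verts := by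
      rw [Set.disjoint_left]
      intro v hv2 hv3
      rw [Walk.mem_verts_toSubgraph] at hv2 hv3
      simp only [Walk.support_nil, List.mem_singleton] at hv2
      subst hv2
      rcases (hB3 v).mp hv3 with h | h
      · exact (fAt v h).2.2 rfl
      · obtain ⟨hvW, hvq⟩ := fWt v h
        rcases hW v hvW (Or.inl A.end_mem_support) with h' | h'
        · exact hpb h'.symm
        · exact hqb h'.symm
    have d24 : Disjoint ((Walk.nil' β : H.Walk β β)).toSubgraph.verts Et.toSubgraph.verts := by
      rw [Set.disjoint_left]
      intro v hv2 hv4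
      rw [Walk.mem_verts_toSubgraph] at hv2 hv4
      simp only [Walk.support_nil, List.mem_singleton] at hv2
      subst hv2
      exact (fEt v hv4).2.2 rfl
    have d34 : Disjoint B3w.toSubgraph.verts Et.toSubgraph.verts := by
      rw [Set.disjoint_left]
      intro v hv3 hv4
      rw [Walk.mem_verts_toSubgraph] at hv3 hv4
      obtain ⟨hvE, hva, hvb⟩ := fEt v hv4
      rcases (hB3 v).mp hv3 with h | h
      · obtain ⟨hvA, _, _⟩ := fAt v h
        rcases hAE v hvA hvE with rfl | rfl
        · exact hva rfl
        · exact hvb rfl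
      · obtain ⟨hvW, hvq⟩ := fWt v h
        rcases hW v hvW (Or.inr (Or.inr hvE)) with h' | h'
        · rw [h'] at hvE
          rcases hAE p hpA hvE with h'' | h''
          · exact hva (h'.trans h'')
          · exact hvb (h'.trans h'')
        · exact hvq h'
    intro i j hij
    fin_cases i <;> fin_cases j
    · exact absurd rfl hij
    · exact d12
    · exact d13
    · exact d14
    · exact d12.symm
    · exact absurd rfl hij
    · exact d23
    · exact d24
    · exact d13.symm
    · exact d23.symm
    · exact absurd rfl hij
    · exact d34
    · exact d14.symm
    · exact d24.symm
    · exact d34.symm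
    · exact absurd rfl hij
  · -- adjacency
    have m3a1 : a1 ∈ B3w.toSubgraph.verts := by
      rw [Walk.mem_verts_toSubgraph]
      exact (hB3 a1).mpr (Or.inl At.start_mem_support)
    have m3c3 : c3 ∈ B3w.toSubgraph.verts := by
      rw [Walk.mem_verts_toSubgraph]
      exact (hB3 c3).mpr (Or.inl At.end_mem_support)
    have m3c4 : c4 ∈ B3w.toSubgraph.verts := by
      rw [Walk.mem_verts_toSubgraph]
      exact (hB3 c4).mpr (Or.inr Wt.end_mem_support)
    have m4q : q ∈ Et.toSubgraph.verts := by
      rw [Walk.mem_verts_toSubgraph]; exact hqEt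
    have m2 : β ∈ ((Walk.nil' β : H.Walk β β)).toSubgraph.verts :=
      Walk.start_mem_verts_toSubgraph _
    have m1a : α ∈ B1w.toSubgraph.verts := Walk.start_mem_verts_toSubgraph _
    have m1c1 : c1 ∈ B1w.toSubgraph.verts := Walk.end_mem_verts_toSubgraph _
    have m4e1 : e1 ∈ Et.toSubgraph.verts := Walk.start_mem_verts_toSubgraph _
    have m4e2 : e2 ∈ Et.toSubgraph.verts := Walk.end_mem_verts_toSubgraph _
    have a12 : ∃ u ∈ B1w.toSubgraph.verts,
        ∃ w ∈ ((Walk.nil' β : H.Walk β β)).toSubgraph.verts, H.Adj u w :=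
      ⟨c1, m1c1, β, m2, hadj1⟩
    have a13 : ∃ u ∈ B1w.toSubgraph.verts, ∃ w ∈ B3w.toSubgraph.verts, H.Adj u w :=
      ⟨α, m1a, a1, m3a1, hadjA⟩
    have a14 : ∃ u ∈ B1w.toSubgraph.verts, ∃ w ∈ Et.toSubgraph.verts, H.Adj u w :=
      ⟨α, m1a, e1, m4e1, hadjE1⟩
    have a23 : ∃ u ∈ ((Walk.nil' β : H.Walk β β)).toSubgraph.verts,
        ∃ w ∈ B3w.toSubgraph.verts, H.Adj u w :=
      ⟨β, m2, c3, m3c3, hadj3.symm⟩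
    have a24 : ∃ u ∈ ((Walk.nil' β : H.Walk β β)).toSubgraph.verts,
        ∃ w ∈ Et.toSubgraph.verts, H.Adj u w :=
      ⟨β, m2, e2, m4e2, hadjE2.symm⟩
    have a34 : ∃ u ∈ B3w.toSubgraph.verts, ∃ w ∈ Et.toSubgraph.verts, H.Adj u w :=
      ⟨c4, m3c4, q, m4q, hadj4⟩
    have symm : ∀ (S T : H.Subgraph), (∃ u ∈ S.verts, ∃ w ∈ T.verts, H.Adj u w) →
        (∃ u ∈ T.verts, ∃ w ∈ S.verts, H.Adj u w) := by
      rintro S T ⟨u, hu, w, hw, huw⟩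
      exact ⟨w, hw, u, hu, huw.symm⟩
    intro i j hij
    fin_cases i <;> fin_cases j
    · exact absurd rfl hij
    · exact a12
    · exact a13
    · exact a14
    · exact symm _ _ a12
    · exact absurd rfl hij
    · exact a23
    · exact a24
    · exact symm _ _ a13
    · exact symm _ _ a23
    · exact absurd rfl hij
    · exact a34
    · exact symm _ _ a14
    · exact symm _ _ a24
    · exact symm _ _ a34
    · exact absurd rfl hij

end K4Helpers

namespace K4Helpers2
open SimpleGraph
variable {V : Type*} {H : SimpleGraph V}

lemma fin3_cases : ∀ (k cp cq : Fin 3), k ≠ 0 → cp ≠ 0 → cp ≠ k → cq ≠ 0 → cq ≠ k →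
    cp = cq := by decide

lemma fin3_eq1 : ∀ c : Fin 3, c ≠ 0 → c ≠ 2 → c = 1 := by decide
lemma fin3_eq2 : ∀ c : Fin 3, c ≠ 0 → c ≠ 1 → c = 2 := by decide
lemma fin3_eq0 : ∀ c : Fin 3, c ≠ 1 → c ≠ 2 → c = 0 := by decide

lemma lift_induce {s : Set V} {u v : {x // x ∈ s}} (w : (H.induce s).Walk u v) :
    ∃ W : H.Walk u.1 v.1, ∀ t ∈ W.support, t ∈ s := by
  induction w with
  | nil =>
    rename_i z
    refine ⟨.nil, ?_⟩
    intro t ht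
    simp only [Walk.support_nil, List.mem_singleton] at ht
    exact ht ▸ z.2
  | @cons z1 z2 z3 hadj t ih =>
    obtain ⟨W, hW⟩ := ih
    refine ⟨.cons hadj W, ?_⟩
    intro t2 ht
    rcases List.mem_cons.mp (show t2 ∈ (z1 : V) :: W.support from ht) with rfl | h
    · exact z1.2
    · exact hW t2 h

end K4Helpers2


open K4Helpers K4Helpers2 in
theorem stmt12 {V : Type*} (H : SimpleGraph V) (x y : V) (hxy : H.Adj x y)
    (ρ : V → Fin 3) (hx : ρ x = 0) (hy : ρ y = 0)
    (hmono : ∀ a b, H.Adj a b → ρ a = ρ b → s(a,b) = s(x,y))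
    (a b : V) (ha : ρ a ≠ 0) (hb : ρ b ≠ 0)
    (hreach : (H.induce {v | ρ v ≠ 0}).Reachable ⟨a, ha⟩ ⟨b, hb⟩)
    (c2 : V) (C2 : H.Walk c2 c2) (hC2 : C2.IsCycle) (hC2odd : Odd C2.length)
    (hC2c : ∀ v ∈ C2.support, ρ v ≠ 2) (haC2 : a ∈ C2.support)
    (c3 : V) (C3 : H.Walk c3 c3) (hC3 : C3.IsCycle) (hC3odd : Odd C3.length)
    (hC3c : ∀ v ∈ C3.support, ρ v ≠ 1) (hbC3 : b ∈ C3.support) :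
    HasK4Minor H := by
  classical
  have hxyne : x ≠ y := hxy.ne
  set g : V → ZMod 2 := fun v => if ρ v = 0 then 0 else 1 with hg
  have key : ∀ (k : Fin 3), k ≠ 0 → ∀ (c : V) (C : H.Walk c c), Odd C.length →
      (∀ v ∈ C.support, ρ v ≠ k) → s(x,y) ∈ C.edges := by
    intro k hk c C hodd hcol
    by_contra hmem
    have hflip : ∀ p q : V, s(p,q) ∈ C.edges → g p ≠ g q := by
      intro p q hpq hgpq
      have hadj : H.Adj p q := C.adj_of_mem_edges hpq
      have hps : p ∈ C.support := C.fst_mem_support_of_mem_edges hpq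
      have hqs : q ∈ C.support := C.snd_mem_support_of_mem_edges hpq
      have hrr : ρ p = ρ q := by
        by_cases h0 : ρ p = 0 <;> by_cases h0' : ρ q = 0
        · rw [h0, h0']
        · exfalso; simp only [hg, h0, h0'] at hgpq
          simp only [if_true, if_false, ite_true, ite_false] at hgpq
          exact absurd hgpq (by decide)
        · exfalso; simp only [hg, h0, h0'] at hgpq
          simp only [if_true, if_false, ite_true, ite_false] at hgpq
          exact absurd hgpq (by decide)
        · exact fin3_cases k (ρ p) (ρ q) hk h0 (hcol p hps) h0' (hcol q hqs)
      exact hmem (hmono p q hadj hrr ▸ hpq)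
    have hpar := parity_walk g C hflip
    rw [sub_self] at hpar
    obtain ⟨n, hn⟩ := hodd
    rw [hn] at hpar
    have h1 : ((2*n+1 : ℕ) : ZMod 2) = 1 := by
      push_cast
      rw [show ((2:ZMod 2)) = 0 from rfl]
      ring
    rw [h1] at hpar
    exact one_ne_zero hpar
  have hxyC2 : s(x,y) ∈ C2.edges := key 2 (by decide) c2 C2 hC2odd hC2c
  have hxyC3 : s(x,y) ∈ C3.edges := key 1 (by decide) c3 C3 hC3odd hC3c
  have hxC2 : x ∈ C2.support := C2.fst_mem_support_of_mem_edges hxyC2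
  have hyC2 : y ∈ C2.support := C2.snd_mem_support_of_mem_edges hxyC2
  have hxC3 : x ∈ C3.support := C3.fst_mem_support_of_mem_edges hxyC3
  have hyC3 : y ∈ C3.support := C3.snd_mem_support_of_mem_edges hxyC3
  -- the connecting walk
  obtain ⟨w0⟩ := hreach
  obtain ⟨W0, hW0⟩ := lift_induce w0
  set S2 : Set V := {v | v ∈ C2.support} with hS2
  set S3 : Set V := {v | v ∈ C3.support} with hS3
  obtain ⟨q, W1, W1r, hq3, hW1S3, hW1cnt, happ1⟩ :=
    firstHit W0 S3 ⟨b, W0.end_mem_support, hbC3⟩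
  have hW1sub : ∀ v ∈ W1.support, v ∈ W0.support := by
    intro v hv; rw [← happ1]
    exact (Walk.mem_support_append_iff _ _).mpr (Or.inl hv)
  obtain ⟨p, W2, W2r, hp2, hW2S2, hW2cnt, happ2⟩ :=
    firstHit W1.reverse S2 ⟨a, W1.reverse.end_mem_support, haC2⟩
  have hW2sub : ∀ v ∈ W2.support, v ∈ W1.support := by
    intro v hv
    have h : v ∈ W1.reverse.support := by
      rw [← happ2]; exact (Walk.mem_support_append_iff _ _).mpr (Or.inl hv)
    rwa [Walk.support_reverse, List.mem_reverse] at h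
  set Wseg : H.Walk p q := W2.reverse with hWsegdef
  have hWsegmem : ∀ v, v ∈ Wseg.support ↔ v ∈ W2.support := by
    intro v; rw [hWsegdef, Walk.support_reverse, List.mem_reverse]
  have hρW : ∀ v ∈ Wseg.support, ρ v ≠ 0 :=
    fun v hv => hW0 v (hW1sub v (hW2sub v ((hWsegmem v).mp hv)))
  have hρp : ρ p = 1 := fin3_eq1 _ (hρW p Wseg.start_mem_support) (hC2c p hp2)
  have hρq : ρ q = 2 := fin3_eq2 _ (hρW q Wseg.end_mem_support) (hC3c q hq3)
  have hpq : p ≠ q := fun h => by rw [h, hρq] at hρp; exact absurd hρp (by decide)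
  have hWsegcnt : Wseg.support.count q = 1 := by
    have h2 : W2.support.count q + W2r.support.tail.count q = 1 := by
      rw [← List.count_append, ← Walk.support_append, happ2, Walk.support_reverse,
        List.count_reverse, hW1cnt]
    have h3 : 0 < W2.support.count q := List.count_pos_iff.mpr W2.start_mem_support
    rw [hWsegdef, Walk.support_reverse, List.count_reverse]
    omega
  -- C3 side : the ear E'
  have hqC3 : q ∈ C3.support := hq3
  set R : H.Walk q q := C3.rotate q hqC3 with hRdef
  have hRcyc : R.IsCycle := hC3.rotate hqC3
  have hmemR : ∀ v, v ∈ R.support ↔ v ∈ C3.support := fun v => mem_rotate C3 hqC3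
  have hqS2 : q ∉ S2 := fun h => (hC2c q h) hρq
  obtain ⟨α, E1, D, ha2, hE1S2, hE1cnt, happ3⟩ :=
    firstHit R S2 ⟨x, (hmemR x).mpr hxC3, hxC2⟩
  obtain ⟨γ, hγ2, hγ3, hγa⟩ : ∃ γ, γ ∈ S2 ∧ γ ∈ C3.support ∧ γ ≠ α := by
    by_cases hax : α = x
    · exact ⟨y, hyC2, hyC3, fun h => hxyne (h.trans hax).symm⟩
    · exact ⟨x, hxC2, hxC3, fun h => hax h.symm⟩
  have hγD : γ ∈ D.support := by
    have h : γ ∈ R.support := (hmemR γ).mpr hγ3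
    rw [← happ3, Walk.mem_support_append_iff] at h
    rcases h with h | h
    · exact absurd (hE1S2 γ h hγ2) hγa
    · exact h
  obtain ⟨β, E2, D2, hb2, hE2S2, hE2cnt, happ4⟩ :=
    firstHit D.reverse S2
      ⟨γ, (by rw [Walk.support_reverse, List.mem_reverse]; exact hγD), hγ2⟩
  have hqa : q ≠ α := fun h => hqS2 (h ▸ ha2)
  have hqb : q ≠ β := fun h => hqS2 (h ▸ hb2)
  have haR : α ∈ R.support := by
    rw [← happ3]; exact (Walk.mem_support_append_iff _ _).mpr (Or.inl E1.end_mem_support)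
  have hsup2 : E2.support ++ D2.support.tail = D.reverse.support := by
    rw [← Walk.support_append, happ4]
  have hab : α ≠ β := by
    intro habeq
    have hcnt1 : R.support.count α = 1 := (cycle_count R hRcyc).2 α haR (fun h => hqa h.symm)
    have hsup1 : E1.support ++ D.support.tail = R.support := by
      rw [← Walk.support_append, happ3]
    have hsplit : E1.support.count α + D.support.tail.count α = 1 := by
      rw [← List.count_append, hsup1, hcnt1]
    have hDt : D.support.tail.count α = 0 := by omega
    have hDcnt : D.support.count α = 1 := by
      rw [Walk.support_eq_cons D, List.count_cons_self, hDt]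
    have hDrev : D.reverse.support.count α = 1 := by
      rw [Walk.support_reverse, List.count_reverse, hDcnt]
    have hsplit2 : E2.support.count α + D2.support.tail.count α = 1 := by
      rw [← List.count_append, hsup2, hDrev]
    have hαE2 : 0 < E2.support.count α :=
      List.count_pos_iff.mpr (by rw [habeq]; exact E2.end_mem_support)
    have hD2t : D2.support.tail.count α = 0 := by omega
    by_cases hD2n : D2.Nil
    · have hs : D2.support = [β] := Walk.nil_iff_support_eq.mp hD2n
      have hγ' : γ ∈ E2.support ++ D2.support.tail := by
        rw [hsup2, Walk.support_reverse, List.mem_reverse]; exact hγD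
      rw [hs] at hγ'
      simp only [List.tail_cons, List.append_nil] at hγ'
      exact hγa ((hE2S2 γ hγ' hγ2).trans habeq.symm)
    · obtain ⟨c0, _, t0, hst⟩ := dropFirst D2 hD2n
      have hm : α ∈ D2.support.tail := by rw [hst, List.tail_cons]; exact t0.end_mem_support
      have := List.count_pos_iff.mpr hm
      omega
  set E' : H.Walk α β := E1.reverse.append E2 with hE'def
  have hE'memiff : ∀ v, v ∈ E'.support ↔ (v ∈ E1.support ∨ v ∈ E2.support) := by
    intro v
    rw [hE'def, Walk.mem_support_append_iff, Walk.support_reverse, List.mem_reverse]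
  have hDsub : ∀ v ∈ D.support, v ∈ R.support := by
    intro v hv
    rw [← happ3]; exact (Walk.mem_support_append_iff _ _).mpr (Or.inr hv)
  have hE2sub : ∀ v ∈ E2.support, v ∈ D.support := by
    intro v hv
    have h : v ∈ D.reverse.support := by
      rw [← happ4]; exact (Walk.mem_support_append_iff _ _).mpr (Or.inl hv)
    rwa [Walk.support_reverse, List.mem_reverse] at h
  have hE1sub : ∀ v ∈ E1.support, v ∈ R.support := by
    intro v hv; rw [← happ3]; exact (Walk.mem_support_append_iff _ _).mpr (Or.inl hv)
  have hE'C3 : ∀ v ∈ E'.support, v ∈ C3.support := by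
    intro v hv
    rcases (hE'memiff v).mp hv with h | h
    · exact (hmemR v).mp (hE1sub v h)
    · exact (hmemR v).mp (hDsub v (hE2sub v h))
  have hE'S2 : ∀ v ∈ E'.support, v ∈ S2 → v = α ∨ v = β := by
    intro v hv hv2
    rcases (hE'memiff v).mp hv with h | h
    · exact Or.inl (hE1S2 v h hv2)
    · exact Or.inr (hE2S2 v h hv2)
  have hqE' : q ∈ E'.support := (hE'memiff q).mpr (Or.inl E1.start_mem_support)
  have hαE2cnt : E2.support.count α = 0 :=
    List.count_eq_zero.mpr (fun h => hab (hE2S2 α h ha2))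
  have hsupE' : E'.support = E1.reverse.support ++ E2.support.tail :=
    Walk.support_append _ _
  have hE'cnta : E'.support.count α = 1 := by
    have ht : E2.support.tail.count α = 0 := by
      have hle := (List.tail_sublist E2.support).count_le α
      omega
    rw [hsupE', List.count_append, Walk.support_reverse, List.count_reverse, hE1cnt, ht]
  have hE'cntb : E'.support.count β = 1 := by
    have h1 : E1.support.count β = 0 :=
      List.count_eq_zero.mpr (fun h => hab (hE1S2 β h hb2).symm)
    have h3 : E2.support.tail.count β = 1 := by
      have h2 := hE2cnt
      rw [Walk.support_eq_cons E2, List.count_cons_of_ne hqb] at h2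
      exact h2
    rw [hsupE', List.count_append, Walk.support_reverse, List.count_reverse, h1, h3]
  -- C2 side : the two arcs
  have haC3 : α ∈ C3.support := (hmemR α).mp haR
  have hbC3' : β ∈ C3.support := by
    have h : β ∈ D.reverse.support := by
      rw [← happ4]; exact (Walk.mem_support_append_iff _ _).mpr (Or.inl E2.end_mem_support)
    rw [Walk.support_reverse, List.mem_reverse] at h
    exact (hmemR β).mp (hDsub β h)
  have hρα : ρ α = 0 := fin3_eq0 _ (hC3c α haC3) (hC2c α ha2)
  have hρβ : ρ β = 0 := fin3_eq0 _ (hC3c β hbC3') (hC2c β hb2)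
  have hpa : p ≠ α := fun h => by rw [h, hρα] at hρp; exact absurd hρp (by decide)
  have hpb : p ≠ β := fun h => by rw [h, hρβ] at hρp; exact absurd hρp (by decide)
  have haC2' : α ∈ C2.support := ha2
  set R2 : H.Walk α α := C2.rotate α haC2' with hR2def
  have hR2cyc : R2.IsCycle := hC2.rotate haC2'
  have hmemR2 : ∀ v, v ∈ R2.support ↔ v ∈ C2.support := fun v => mem_rotate C2 haC2'
  have hbR2 : β ∈ R2.support := (hmemR2 β).mpr hb2
  set A1 : H.Walk α β := R2.takeUntil β hbR2 with hA1def
  set A2 : H.Walk β α := R2.dropUntil β hbR2 with hA2def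
  have hspec : A1.append A2 = R2 := Walk.take_spec R2 hbR2
  have hsupR2 : A1.support ++ A2.support.tail = R2.support := by
    rw [← Walk.support_append, hspec]
  have hcycc := cycle_count R2 hR2cyc
  have cntb : R2.support.count β = 1 := hcycc.2 β hbR2 (fun h => hab h.symm)
  have cnta : R2.support.count α = 2 := hcycc.1
  have cntA1b : A1.support.count β = 1 := Walk.count_support_takeUntil_eq_one R2 hbR2
  have cntA2tb : A2.support.tail.count β = 0 := by
    have h : A1.support.count β + A2.support.tail.count β = 1 := by
      rw [← List.count_append, hsupR2, cntb]
    omega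
  have cntA2b : A2.support.count β = 1 := by
    rw [Walk.support_eq_cons A2, List.count_cons_self, cntA2tb]
  have hA2nn : ¬A2.Nil := Walk.not_nil_of_ne (fun h => hab h.symm)
  obtain ⟨d0, _, t2, hst2⟩ := dropFirst A2 hA2nn
  have hαA2t : α ∈ A2.support.tail := by
    rw [hst2, List.tail_cons]; exact t2.end_mem_support
  have cntA1a : A1.support.count α = 1 ∧ A2.support.tail.count α = 1 := by
    have hs : A1.support.count α + A2.support.tail.count α = 2 := by
      rw [← List.count_append, hsupR2, cnta]
    have h1 : 0 < A1.support.count α := List.count_pos_iff.mpr A1.start_mem_support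
    have h2 : 0 < A2.support.tail.count α := List.count_pos_iff.mpr hαA2t
    omega
  have cntA2a : A2.support.count α = 1 := by
    rw [Walk.support_eq_cons A2, List.count_cons_of_ne (Ne.symm hab), cntA1a.2]
  have hA1sub : ∀ v ∈ A1.support, v ∈ C2.support := fun v hv =>
    (hmemR2 v).mp (Walk.support_takeUntil_subset R2 hbR2 hv)
  have hA2sub : ∀ v ∈ A2.support, v ∈ C2.support := fun v hv =>
    (hmemR2 v).mp (Walk.support_dropUntil_subset R2 hbR2 hv)
  have hA1A2 : ∀ v, v ∈ A1.support → v ∈ A2.support → v = α ∨ v = β := by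
    intro v h1 h2
    by_contra hcon
    push_neg at hcon
    obtain ⟨hva, hvb⟩ := hcon
    have hvR2 : v ∈ R2.support := by rw [← hsupR2]; exact List.mem_append_left _ h1
    have hcv : R2.support.count v = 1 := hcycc.2 v hvR2 hva
    have hs : A1.support.count v + A2.support.tail.count v = 1 := by
      rw [← List.count_append, hsupR2, hcv]
    have hp1 : 0 < A1.support.count v := List.count_pos_iff.mpr h1
    have hvt : v ∈ A2.support.tail := by
      rw [Walk.support_eq_cons A2] at h2
      rcases List.mem_cons.mp h2 with h | h
      · exact absurd h hvb
      · exact h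
    have hp2 : 0 < A2.support.tail.count v := List.count_pos_iff.mpr hvt
    omega
  have hWS2 : ∀ v ∈ Wseg.support, v ∈ S2 → v = p :=
    fun v hv h2 => hW2S2 v ((hWsegmem v).mp hv) h2
  have hWS3 : ∀ v ∈ Wseg.support, v ∈ S3 → v = q :=
    fun v hv h3 => hW1S3 v (hW2sub v ((hWsegmem v).mp hv)) h3
  have hpR2 : p ∈ R2.support := (hmemR2 p).mpr hp2
  have hmemrev : ∀ {u v : V} (w : H.Walk u v) (t : V),
      t ∈ w.reverse.support ↔ t ∈ w.support := by
    intro u v w t; rw [Walk.support_reverse, List.mem_reverse]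
  have hpcase : p ∈ A1.support ∨ p ∈ A2.support := by
    rw [← hsupR2] at hpR2
    rcases List.mem_append.mp hpR2 with h | h
    · exact Or.inl h
    · exact Or.inr (List.mem_of_mem_tail h)
  rcases hpcase with hpA | hpA
  · refine buildK4 A1 A2.reverse E' Wseg hab hpa hpb hqa hqb hpq hpA hqE'
      ?_ ?_ ?_ ?_ hWsegcnt cntA1a.1 cntA1b ?_ hE'cnta hE'cntb
    · intro v h1 h2; exact hA1A2 v h1 ((hmemrev A2 v).mp h2)
    · intro v h1 h2; exact hE'S2 v h2 (hA1sub v h1)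
    · intro v h1 h2; exact hE'S2 v h2 (hA2sub v ((hmemrev A2 v).mp h1))
    · intro v hv hor
      rcases hor with h | h | h
      · exact Or.inl (hWS2 v hv (hA1sub v h))
      · exact Or.inl (hWS2 v hv (hA2sub v ((hmemrev A2 v).mp h)))
      · exact Or.inr (hWS3 v hv (hE'C3 v h))
    · rw [Walk.support_reverse, List.count_reverse]; exact cntA2b
  · have hpA2r : p ∈ A2.reverse.support := (hmemrev A2 p).mpr hpA
    refine buildK4 A2.reverse A1 E' Wseg hab hpa hpb hqa hqb hpq hpA2r hqE'
      ?_ ?_ ?_ ?_ hWsegcnt ?_ ?_ cntA1b hE'cnta hE'cntb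
    · intro v h1 h2; exact hA1A2 v h2 ((hmemrev A2 v).mp h1)
    · intro v h1 h2; exact hE'S2 v h2 (hA2sub v ((hmemrev A2 v).mp h1))
    · intro v h1 h2; exact hE'S2 v h2 (hA1sub v h1)
    · intro v hv hor
      rcases hor with h | h | h
      · exact Or.inl (hWS2 v hv (hA2sub v ((hmemrev A2 v).mp h)))
      · exact Or.inl (hWS2 v hv (hA1sub v h))
      · exact Or.inr (hWS3 v hv (hE'C3 v h))
    · rw [Walk.support_reverse, List.count_reverse]; exact cntA2a
    · rw [Walk.support_reverse, List.count_reverse]; exact cntA2b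
end

section
/- Let H be a graph with χ(H) ≥ 4, edge xy, and a proper 3-coloring π of H − xy with classes π₁, π₂, π₃, x, y ∈ π₁. Define ρ from π by swapping colors 2 and 3 on every connected component of H − π₁ that contains no vertex of any odd cycle of H − π₃. Then ρ's only monochromatic edge in H is xy, and some component of H − ρ₁ contains both a vertex of an odd cycle of H − ρ₃ and a vertex of an odd cycle of H − ρ₂. -/
open SimpleGraph

/-- swap colors 2 and 3 (here encoded as 1 and 2 in `Fin 3`). -/
def swapColor : Fin 3 → Fin 3 := fun c => if c = 1 then 2 else if c = 2 then 1 else c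

/-- `v`'s component of `H − π₁` contains a vertex of an odd cycle of `H − π₃`. -/
def TouchesOddCycle {V : Type*} (H : SimpleGraph V) (π : V → Fin 3) (v : V) (hv : π v ≠ 0) : Prop :=
  ∃ (w : V) (hw : π w ≠ 0), (H.induce {u | π u ≠ 0}).Reachable ⟨v, hv⟩ ⟨w, hw⟩ ∧
    ∃ (p : V) (c : H.Walk p p), c.IsCycle ∧ Odd c.length ∧
      (∀ t ∈ c.support, π t ≠ 2) ∧ w ∈ c.support

open Classical in
/-- the recoloring ρ obtained from π by swapping colors 2,3 on components of `H − π₁`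
containing no vertex of an odd cycle of `H − π₃`. -/
noncomputable def rho {V : Type*} (H : SimpleGraph V) (π : V → Fin 3) : V → Fin 3 :=
  fun v => if hv : π v = 0 then 0
    else if TouchesOddCycle H π v hv then π v else swapColor (π v)

namespace StmtAux

open SimpleGraph Walk

variable {V : Type*}

/-- Any odd closed walk contains an odd cycle (supported inside the walk's support). -/
lemma exists_odd_cycle (G : SimpleGraph V) :
    ∀ (n : ℕ) (u : V) (p : G.Walk u u), p.length = n → Odd n →
      ∃ (v : V) (c : G.Walk v v), c.IsCycle ∧ Odd c.length ∧
        ∀ t ∈ c.support, t ∈ p.support := by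
  classical
  intro n
  induction n using Nat.strong_induction_on with
  | _ n IH =>
    intro u p hlen hodd
    by_cases hcyc : p.IsCycle
    · exact ⟨u, p, hcyc, hlen ▸ hodd, fun t ht => ht⟩
    by_cases hdup : p.support.tail.Nodup
    · exfalso
      cases p with
      | nil =>
        simp only [Walk.length_nil] at hlen
        subst hlen; simp [Nat.odd_iff] at hodd
      | @cons _ v _ h q =>
        have hq : q.IsPath := (Walk.isPath_def q).mpr (by simpa using hdup)
        have hedge : s(u, v) ∈ q.edges := by
          by_contra he
          exact hcyc ((Walk.cons_isCycle_iff q h).mpr ⟨hq, he⟩)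
        cases q with
        | nil => simp at hedge
        | @cons _ w _ h' q' =>
          rw [Walk.edges_cons, List.mem_cons] at hedge
          rcases hedge with heq | hmem
          · rw [Sym2.eq_iff] at heq
            rcases heq with ⟨h1, h2⟩ | ⟨h1, _⟩
            · exact h.ne h1
            · subst h1
              have : q' = Walk.nil := Walk.isPath_iff_eq_nil.mp hq.of_cons
              subst this
              simp only [Walk.length_cons, Walk.length_nil] at hlen
              subst hlen
              simp [Nat.odd_iff] at hodd
          · have hv : v ∈ q'.support := Walk.snd_mem_support_of_mem_edges q' hmem
            have : v ∉ q'.support := by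
              have := hq.support_nodup
              simp only [Walk.support_cons, List.nodup_cons] at this
              exact this.1
            exact this hv
    · -- there is a duplicated vertex in the tail; rotate and split
      obtain ⟨a, hdupa⟩ := List.exists_duplicate_iff_not_nodup.mpr hdup
      have hcount : 2 ≤ p.support.tail.count a := List.duplicate_iff_two_le_count.mp hdupa
      have ha : a ∈ p.support := List.mem_of_mem_tail hdupa.mem
      obtain ⟨p', hlen', hcount', hsub⟩ :
          ∃ p' : G.Walk a a, p'.length = n ∧ 2 ≤ p'.support.tail.count a ∧
            ∀ t ∈ p'.support, t ∈ p.support := by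
        refine ⟨p.rotate a ha, ?_, ?_, ?_⟩
        · rw [← hlen]
          have := (Walk.rotate_darts p a ha).perm.length_eq
          simpa using this
        · rw [(Walk.support_rotate p a ha).perm.count_eq]; exact hcount
        · intro t ht
          rw [Walk.support_eq_cons] at ht
          rcases List.mem_cons.mp ht with rfl | ht
          · exact ha
          · exact List.mem_of_mem_tail ((Walk.support_rotate p a ha).perm.mem_iff.mp ht)
      cases p' with
      | nil =>
        simp only [Walk.length_nil] at hlen'
        subst hlen'; simp [Nat.odd_iff] at hodd
      | @cons _ w _ h' q' =>
        simp only [Walk.support_cons, List.tail_cons] at hcount'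
        have haq : a ∈ q'.support := List.count_pos_iff.mp (by omega)
        set q₁ := q'.takeUntil a haq with hq₁
        set q₂ := q'.dropUntil a haq with hq₂
        have hspec : q₁.append q₂ = q' := Walk.take_spec q' haq
        have hsplit : 1 + q₁.length + q₂.length = n := by
          have : q'.length = q₁.length + q₂.length := by
            rw [← hspec, Walk.length_append]
          simp only [Walk.length_cons] at hlen'
          omega
        have hq₂ne : q₂.length ≠ 0 := by
          intro h0
          have h0' : q₂ = Walk.nil := Walk.nil_iff_eq_nil.mp (Walk.length_eq_zero_iff.mp h0)
          have hsupp : q'.support = q₁.support ++ q₂.support.tail := by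
            rw [← hspec, Walk.support_append]
          rw [hsupp, h0'] at hcount'
          simp only [Walk.support_nil, List.tail_cons, List.append_nil] at hcount'
          rw [Walk.count_support_takeUntil_eq_one q' haq] at hcount'
          omega
        have hsub' : ∀ t ∈ q'.support, t ∈ p.support := by
          intro t ht
          exact hsub t (by rw [Walk.support_cons]; exact List.mem_cons_of_mem _ ht)
        have hon : n % 2 = 1 := Nat.odd_iff.mp hodd
        rcases (by omega : (1 + q₁.length) % 2 = 1 ∨ q₂.length % 2 = 1) with hc | hc
        · -- c₁ := cons h' q₁ is an odd closed walk, strictly shorter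
          have hlt : (Walk.cons h' q₁).length < n := by
            simp only [Walk.length_cons]; omega
          obtain ⟨v, c, hc1, hc2, hc3⟩ := IH _ hlt a (Walk.cons h' q₁)
            rfl (by simp only [Walk.length_cons]; rw [Nat.odd_iff]; omega)
          refine ⟨v, c, hc1, hc2, fun t ht => ?_⟩
          rcases List.mem_cons.mp (by simpa [Walk.support_cons] using hc3 t ht) with rfl | ht'
          · exact hsub t (Walk.start_mem_support _)
          · exact hsub' t (Walk.support_takeUntil_subset q' haq ht')
        · have hlt : q₂.length < n := by omega
          obtain ⟨v, c, hc1, hc2, hc3⟩ := IH _ hlt a q₂ rfl (Nat.odd_iff.mpr hc)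
          refine ⟨v, c, hc1, hc2, fun t ht => ?_⟩
          exact hsub' t (Walk.support_dropUntil_subset q' haq (hc3 t ht))

/-- A graph with no odd closed walk is 2-colorable. -/
lemma colorable_two_of_no_odd_closed_walk {G : SimpleGraph V}
    (h : ∀ (u : V) (p : G.Walk u u), ¬ Odd p.length) : G.Colorable 2 := by
  classical
  have parity : ∀ (u v : V) (p q : G.Walk u v), (Odd p.length ↔ Odd q.length) := by
    intro u v p q
    have hpar := h u (p.append q.reverse)
    rw [Walk.length_append, Walk.length_reverse, Nat.odd_iff] at hpar
    rw [Nat.odd_iff, Nat.odd_iff]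
    omega
  have reach : ∀ v : V, G.Reachable (G.connectedComponentMk v).out v := fun v =>
    ConnectedComponent.exact (Quot.out_eq _)
  let w : ∀ v : V, G.Walk (G.connectedComponentMk v).out v := fun v => (reach v).some
  refine ⟨Coloring.mk (fun v => if Odd (w v).length then 1 else 0) ?_⟩
  intro a b hab heq
  have hcomp : G.connectedComponentMk a = G.connectedComponentMk b :=
    ConnectedComponent.sound ⟨hab.toWalk⟩
  have hout : (G.connectedComponentMk b).out = (G.connectedComponentMk a).out := by rw [hcomp]
  have hpar := parity _ _ ((w a).append hab.toWalk) ((w b).copy hout rfl)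
  rw [Walk.length_append, Walk.length_copy] at hpar
  have hiff : (Odd (w a).length ↔ Odd (w b).length) := by
    by_cases h1 : Odd (w a).length <;> by_cases h2 : Odd (w b).length <;>
      simp [h1, h2] at heq ⊢
  have h1 : hab.toWalk.length = 1 := rfl
  rw [h1, Nat.odd_iff, Nat.odd_iff] at hpar
  rw [Nat.odd_iff, Nat.odd_iff] at hiff
  omega

/-- transporting reachability along an equality of vertex sets. -/
lemma reach_transport (G : SimpleGraph V) {s t : Set V} (hst : s = t) {a b : V}
    (ha : a ∈ s) (hb : b ∈ s) (ha' : a ∈ t) (hb' : b ∈ t)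
    (h : (G.induce s).Reachable ⟨a, ha⟩ ⟨b, hb⟩) :
    (G.induce t).Reachable ⟨a, ha'⟩ ⟨b, hb'⟩ := by
  subst hst; exact h

lemma swap_ne_zero : ∀ c : Fin 3, c ≠ 0 → swapColor c ≠ 0 := by decide

lemma swap_inj : ∀ c d : Fin 3, swapColor c = swapColor d → c = d := by decide

lemma fin3_eq_two : ∀ c : Fin 3, c ≠ 0 → c ≠ 1 → c = 2 := by decide

lemma swap_ne_one : ∀ c : Fin 3, c ≠ 0 → swapColor c ≠ 1 → c ≠ 2 := by decide

section RhoLemmas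

variable {H : SimpleGraph V} {π : V → Fin 3} {v : V}

lemma rho_eq_zero (hv : π v = 0) : rho H π v = 0 := by
  unfold rho; rw [dif_pos hv]

lemma rho_of_touch (hv : π v ≠ 0) (ht : TouchesOddCycle H π v hv) : rho H π v = π v := by
  unfold rho; rw [dif_neg hv, if_pos ht]

lemma rho_of_not_touch (hv : π v ≠ 0) (ht : ¬ TouchesOddCycle H π v hv) :
    rho H π v = swapColor (π v) := by
  unfold rho; rw [dif_neg hv, if_neg ht]

lemma rho_ne_zero (hv : π v ≠ 0) : rho H π v ≠ 0 := by
  by_cases ht : TouchesOddCycle H π v hv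
  · rw [rho_of_touch hv ht]; exact hv
  · rw [rho_of_not_touch hv ht]; exact swap_ne_zero _ hv

lemma touches_of_reachable {u : V} (hu : π u ≠ 0) (hv : π v ≠ 0)
    (hr : (H.induce {t | π t ≠ 0}).Reachable ⟨u, hu⟩ ⟨v, hv⟩)
    (ht : TouchesOddCycle H π v hv) : TouchesOddCycle H π u hu := by
  obtain ⟨w, hw, hr', rest⟩ := ht
  exact ⟨w, hw, hr.trans hr', rest⟩

end RhoLemmas

end StmtAux

open StmtAux in
theorem stmt13 {V : Type*} [Fintype V] (H : SimpleGraph V) (x y : V) (hxy : H.Adj x y)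
    (h4 : 4 ≤ H.chromaticNumber)
    (π : (H.deleteEdges {s(x,y)}).Coloring (Fin 3))
    (hx : π x = 0) (hy : π y = 0) :
    (∀ a b, H.Adj a b → rho H (⇑π) a = rho H (⇑π) b → s(a,b) = s(x,y)) ∧
    ∃ (a b : V) (ha : rho H (⇑π) a ≠ 0) (hb : rho H (⇑π) b ≠ 0),
      (H.induce {v | rho H (⇑π) v ≠ 0}).Reachable ⟨a, ha⟩ ⟨b, hb⟩ ∧
      (∃ (p : V) (c : H.Walk p p), c.IsCycle ∧ Odd c.length ∧
        (∀ t ∈ c.support, rho H (⇑π) t ≠ 2) ∧ a ∈ c.support) ∧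
      (∃ (p : V) (c : H.Walk p p), c.IsCycle ∧ Odd c.length ∧
        (∀ t ∈ c.support, rho H (⇑π) t ≠ 1) ∧ b ∈ c.support) := by
  classical
  -- any monochromatic (under π) edge of H is xy
  have edge_eq : ∀ {a b : V}, H.Adj a b → (⇑π) a = (⇑π) b → s(a,b) = s(x,y) := by
    intro a b hab hpi
    by_contra hne
    exact π.valid (by rw [deleteEdges_adj]; exact ⟨hab, by simpa using hne⟩) hpi
  -- adjacency in the induced graph on nonzero vertices
  have ind_adj : ∀ {a b : V} (ha : (⇑π) a ≠ 0) (hb : (⇑π) b ≠ 0), H.Adj a b →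
      (H.induce {u | (⇑π) u ≠ 0}).Adj ⟨a, ha⟩ ⟨b, hb⟩ := by
    intro a b ha hb hab
    simpa using hab
  -- Part 1
  have part1 : ∀ a b, H.Adj a b → rho H (⇑π) a = rho H (⇑π) b → s(a,b) = s(x,y) := by
    intro a b hab hr
    by_cases ha0 : (⇑π) a = 0
    · by_cases hb0 : (⇑π) b = 0
      · exact edge_eq hab (by rw [ha0, hb0])
      · exact absurd hr.symm (by rw [rho_eq_zero ha0]; exact rho_ne_zero hb0)
    · by_cases hb0 : (⇑π) b = 0
      · exact absurd hr (by rw [rho_eq_zero hb0]; exact rho_ne_zero ha0)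
      · -- both nonzero: contradiction
        exfalso
        have hreach : (H.induce {u | (⇑π) u ≠ 0}).Reachable ⟨a, ha0⟩ ⟨b, hb0⟩ :=
          (ind_adj ha0 hb0 hab).reachable
        have hpieq : (⇑π) a = (⇑π) b := by
          by_cases hta : TouchesOddCycle H (⇑π) a ha0
          · have htb : TouchesOddCycle H (⇑π) b hb0 :=
              touches_of_reachable hb0 ha0 hreach.symm hta
            rw [rho_of_touch ha0 hta, rho_of_touch hb0 htb] at hr
            exact hr
          · have htb : ¬ TouchesOddCycle H (⇑π) b hb0 := fun htb =>
              hta (touches_of_reachable ha0 hb0 hreach htb)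
            rw [rho_of_not_touch ha0 hta, rho_of_not_touch hb0 htb] at hr
            exact swap_inj _ _ hr
        have := edge_eq hab hpieq
        rw [Sym2.eq_iff] at this
        rcases this with ⟨rfl, rfl⟩ | ⟨rfl, rfl⟩
        · exact ha0 hx
        · exact ha0 hy
  refine ⟨part1, ?_⟩
  -- there is an odd cycle avoiding ρ-color 1
  have claim1 : ∃ (p : V) (c : H.Walk p p), c.IsCycle ∧ Odd c.length ∧
      ∀ t ∈ c.support, rho H (⇑π) t ≠ 1 := by
    by_contra hno
    have hnowalk : ∀ (u : {v : V // v ∈ {v | rho H (⇑π) v ≠ 1}})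
        (p : (H.induce {v | rho H (⇑π) v ≠ 1}).Walk u u), ¬ Odd p.length := by
      intro u p hodd
      obtain ⟨v, c, hcyc, hcodd, hsup⟩ := exists_odd_cycle _ _ u p rfl hodd
      let f := (SimpleGraph.Embedding.induce {v | rho H (⇑π) v ≠ 1} (G := H)).toHom
      have hinj : Function.Injective f := fun s t hst => Subtype.ext hst
      refine hno ⟨f v, c.map f, hcyc.map hinj, ?_, ?_⟩
      · rw [Walk.length_map]; exact hcodd
      · intro t ht
        rw [Walk.support_map, List.mem_map] at ht
        obtain ⟨s, _, rfl⟩ := ht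
        exact s.2
    obtain ⟨C2⟩ := colorable_two_of_no_odd_closed_walk hnowalk
    have hcol3 : H.Colorable 3 := by
      refine ⟨Coloring.mk
        (fun v => if hv : rho H (⇑π) v = 1 then 1 else if C2 ⟨v, hv⟩ = 0 then 0 else 2) ?_⟩
      intro a b hab heq
      have heq' : (if hv : rho H (⇑π) a = 1 then (1 : Fin 3) else
          if C2 ⟨a, hv⟩ = 0 then 0 else 2) = (if hv : rho H (⇑π) b = 1 then (1 : Fin 3) else
          if C2 ⟨b, hv⟩ = 0 then 0 else 2) := heq
      clear heq
      by_cases ha1 : rho H (⇑π) a = 1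
      · by_cases hb1 : rho H (⇑π) b = 1
        · have := part1 a b hab (by rw [ha1, hb1])
          rw [Sym2.eq_iff] at this
          rcases this with ⟨rfl, rfl⟩ | ⟨rfl, rfl⟩
          · rw [rho_eq_zero hx] at ha1; exact absurd ha1 (by decide)
          · rw [rho_eq_zero hy] at ha1; exact absurd ha1 (by decide)
        · rw [dif_pos ha1, dif_neg hb1] at heq'
          split_ifs at heq' <;> exact absurd heq' (by decide)
      · by_cases hb1 : rho H (⇑π) b = 1
        · rw [dif_neg ha1, dif_pos hb1] at heq'
          split_ifs at heq' <;> exact absurd heq' (by decide)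
        · rw [dif_neg ha1, dif_neg hb1] at heq'
          have hadj : (H.induce {v | rho H (⇑π) v ≠ 1}).Adj ⟨a, ha1⟩ ⟨b, hb1⟩ := by
            simpa using hab
          have hC := C2.valid hadj
          have : ∀ u w : Fin 2, u ≠ w →
              ((if u = 0 then (0 : Fin 3) else 2) ≠ if w = 0 then 0 else 2) := by decide
          exact this _ _ hC heq'
    have hle := hcol3.chromaticNumber_le
    have := h4.trans hle
    norm_num at this
  obtain ⟨p₀, c', hcyc', hodd', hρ1⟩ := claim1
  -- some vertex of c' has π ≠ 0
  have claim2 : ∃ b ∈ c'.support, (⇑π) b ≠ 0 := by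
    by_contra hall
    push_neg at hall
    have hrep : ∀ e ∈ c'.edges, e = s(x,y) := by
      intro e he
      induction e using Sym2.ind with
      | _ u1 u2 =>
        have hadj : H.Adj u1 u2 := Walk.adj_of_mem_edges c' he
        have h1 : (⇑π) u1 = 0 := hall u1 (Walk.fst_mem_support_of_mem_edges c' he)
        have h2 : (⇑π) u2 = 0 := hall u2 (Walk.snd_mem_support_of_mem_edges c' he)
        exact edge_eq hadj (by rw [h1, h2])
    have hnodup : c'.edges.Nodup := hcyc'.isCircuit.isTrail.edges_nodup
    have hlen3 : 3 ≤ c'.length := hcyc'.three_le_length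
    have hrep' : c'.edges = List.replicate c'.edges.length s(x,y) :=
      List.eq_replicate_length.mpr hrep
    rw [hrep', List.nodup_replicate] at hnodup
    rw [Walk.length_edges] at hnodup
    omega
  obtain ⟨b₀, hb₀mem, hb₀π⟩ := claim2
  by_cases hall : ∀ t ∈ c'.support, ∀ (ht : (⇑π) t ≠ 0), ¬ TouchesOddCycle H (⇑π) t ht
  · -- then c' is an odd cycle avoiding π-color 2, so b₀ touches: contradiction
    exfalso
    have hπ2 : ∀ t ∈ c'.support, (⇑π) t ≠ 2 := by
      intro t ht
      by_cases ht0 : (⇑π) t = 0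
      · rw [ht0]; decide
      · have := rho_of_not_touch (H := H) ht0 (hall t ht ht0)
        have h1 : swapColor ((⇑π) t) ≠ 1 := by rw [← this]; exact hρ1 t ht
        exact swap_ne_one _ ht0 h1
    exact hall b₀ hb₀mem hb₀π
      ⟨b₀, hb₀π, Reachable.refl _, p₀, c', hcyc', hodd', hπ2, hb₀mem⟩
  · push_neg at hall
    obtain ⟨t₀, ht₀mem, ht₀π, htouch⟩ := hall
    -- t₀ touches an odd cycle avoiding π-color 2
    obtain ⟨w, hwπ, hreach, p₁, d, dcyc, dodd, dπ2, hwmem⟩ := htouch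
    -- every vertex of d keeps its color, and d avoids ρ-color 2
    have hdρ2 : ∀ t ∈ d.support, rho H (⇑π) t ≠ 2 := by
      intro t ht
      by_cases ht0 : (⇑π) t = 0
      · rw [rho_eq_zero ht0]; decide
      · have htt : TouchesOddCycle H (⇑π) t ht0 :=
          ⟨t, ht0, Reachable.refl _, p₁, d, dcyc, dodd, dπ2, ht⟩
        rw [rho_of_touch ht0 htt]
        exact dπ2 t ht
    have hset : {v : V | rho H (⇑π) v ≠ 0} = {v : V | (⇑π) v ≠ 0} := by
      ext v
      simp only [Set.mem_setOf_eq]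
      constructor
      · intro h h0; exact h (rho_eq_zero h0)
      · exact rho_ne_zero
    have hwρ : rho H (⇑π) w ≠ 0 := rho_ne_zero hwπ
    have ht₀ρ : rho H (⇑π) t₀ ≠ 0 := rho_ne_zero ht₀π
    refine ⟨w, t₀, hwρ, ht₀ρ, ?_, ⟨p₁, d, dcyc, dodd, hdρ2, hwmem⟩,
      ⟨p₀, c', hcyc', hodd', hρ1, ht₀mem⟩⟩
    exact reach_transport H hset.symm hwπ ht₀π hwρ ht₀ρ hreach.symm
end

section
/- Every graph with no K_4 minor has a vertex of degree at most 2. -/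
open SimpleGraph

namespace K4Work

variable {V : Type*} {V' : Type*}

attribute [local instance] Classical.propDecidable

/-- step relation within a set -/
def Stp (G : SimpleGraph V) (S : Set V) : V → V → Prop :=
  fun x y => x ∈ S ∧ y ∈ S ∧ G.Adj x y

/-- linked within a set -/
def Lk (G : SimpleGraph V) (S : Set V) : V → V → Prop :=
  Relation.ReflTransGen (Stp G S)

lemma stp_symm (G : SimpleGraph V) (S : Set V) : Symmetric (Stp G S) :=
  fun _ _ ⟨ha, hb, hadj⟩ => ⟨hb, ha, hadj.symm⟩

lemma lk_symm {G : SimpleGraph V} {S : Set V} {a b : V} (h : Lk G S a b) : Lk G S b a :=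
  haveI : Std.Symm (Stp G S) := ⟨stp_symm G S⟩; (Relation.ReflTransGen.symmetric (r := Stp G S)).symm _ _ h

lemma lk_mono {G : SimpleGraph V} {S T : Set V} (hST : S ⊆ T) {a b : V} (h : Lk G S a b) :
    Lk G T a b := by
  induction h with
  | refl => exact Relation.ReflTransGen.refl
  | tail _ h2 ih => exact ih.tail ⟨hST h2.1, hST h2.2.1, h2.2.2⟩

def GoodSet (G : SimpleGraph V) (S : Set V) : Prop :=
  S.Nonempty ∧ ∀ a ∈ S, ∀ b ∈ S, Lk G S a b

def K4S (G : SimpleGraph V) : Prop :=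
  ∃ S : Fin 4 → Set V,
    (∀ i, GoodSet G (S i)) ∧
    (∀ i j, i ≠ j → Disjoint (S i) (S j)) ∧
    (∀ i j, i ≠ j → ∃ a ∈ S i, ∃ b ∈ S j, G.Adj a b)

lemma goodset_singleton (G : SimpleGraph V) (v : V) : GoodSet G {v} := by
  refine ⟨⟨v, rfl⟩, ?_⟩
  rintro a rfl b rfl
  exact Relation.ReflTransGen.refl

lemma goodset_pair {G : SimpleGraph V} {s t : V} (h : G.Adj s t) : GoodSet G {s, t} := by
  have hst : Lk G {s, t} s t :=
    Relation.ReflTransGen.single ⟨Or.inl rfl, Or.inr rfl, h⟩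
  refine ⟨⟨s, Or.inl rfl⟩, ?_⟩
  rintro a (rfl | rfl) b (rfl | rfl)
  · exact Relation.ReflTransGen.refl
  · exact hst
  · exact lk_symm hst
  · exact Relation.ReflTransGen.refl

/-- From K4S we get the actual minor. -/
lemma K4S.hasK4Minor {G : SimpleGraph V} (h : K4S G) : HasK4Minor G := by
  obtain ⟨S, hgood, hdisj, hadj⟩ := h
  refine ⟨fun i => ⟨S i, fun a b => a ∈ S i ∧ b ∈ S i ∧ G.Adj a b,
      fun h => h.2.2, fun h => h.1, ⟨fun a b ⟨x, y, z⟩ => ⟨y, x, z.symm⟩⟩⟩,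
      fun i => (hgood i).1, fun i => ?_, fun i j hij => hdisj i j hij,
      fun i j hij => hadj i j hij⟩
  rw [SimpleGraph.Subgraph.connected_iff]
  constructor
  · constructor
    rintro ⟨a, ha⟩ ⟨b, hb⟩
    have hl : Lk G (S i) a b := (hgood i).2 a ha b hb
    revert hb
    induction hl with
    | refl => intro hb; rfl
    | @tail c d h1 h2 ih =>
      intro hb
      exact (ih h2.1).trans (SimpleGraph.Adj.reachable (by exact h2 : _))
  · exact (hgood i).1

/-- main transfer lemma: blow-up of a K4S along a "minor map". -/
lemma master {G : SimpleGraph V} {G' : SimpleGraph V'} (φ : V' → Set V)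
    (h1 : ∀ a, GoodSet G (φ a))
    (h2 : ∀ a b, a ≠ b → Disjoint (φ a) (φ b))
    (h3 : ∀ a b, G'.Adj a b → ∃ x ∈ φ a, ∃ y ∈ φ b, G.Adj x y)
    (h : K4S G') : K4S G := by
  obtain ⟨S, hgood, hdisj, hadj⟩ := h
  refine ⟨fun i => ⋃ a ∈ S i, φ a, ?_, ?_, ?_⟩
  · intro i
    obtain ⟨a0, ha0⟩ := (hgood i).1
    obtain ⟨x0, hx0⟩ := (h1 a0).1
    refine ⟨⟨x0, Set.mem_biUnion ha0 hx0⟩, ?_⟩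
    -- connectivity of union
    have key : ∀ a ∈ S i, ∀ b, Lk G' (S i) a b → ∀ x ∈ φ a, ∀ y ∈ φ b,
        Lk G (⋃ c ∈ S i, φ c) x y := by
      intro a ha b hab
      induction hab with
      | refl =>
        intro x hx y hy
        exact lk_mono (Set.subset_biUnion_of_mem (u := φ) ha) ((h1 a).2 x hx y hy)
      | @tail c d h1' h2' ih =>
        intro x hx y hy
        obtain ⟨x', hx', y', hy', hxy'⟩ := h3 c d h2'.2.2
        have l1 : Lk G (⋃ c ∈ S i, φ c) x x' := ih x hx x' hx'
        have l2 : Lk G (⋃ c ∈ S i, φ c) x' y' :=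
          Relation.ReflTransGen.single
            ⟨Set.mem_biUnion h2'.1 hx', Set.mem_biUnion h2'.2.1 hy', hxy'⟩
        have l3 : Lk G (⋃ c ∈ S i, φ c) y' y :=
          lk_mono (Set.subset_biUnion_of_mem (u := φ) h2'.2.1) ((h1 d).2 y' hy' y hy)
        exact (l1.trans l2).trans l3
    rintro x hx y hy
    rw [Set.mem_iUnion₂] at hx hy
    obtain ⟨a, ha, hxa⟩ := hx
    obtain ⟨b, hb, hyb⟩ := hy
    exact key a ha b ((hgood i).2 a ha b hb) x hxa y hyb
  · intro i j hij
    rw [Set.disjoint_left]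
    rintro x hx hx'
    rw [Set.mem_iUnion₂] at hx hx'
    obtain ⟨a, ha, hxa⟩ := hx
    obtain ⟨b, hb, hxb⟩ := hx'
    have hab : a ≠ b := by
      rintro rfl
      exact (Set.disjoint_left.mp (hdisj i j hij) ha) hb
    exact Set.disjoint_left.mp (h2 a b hab) hxa hxb
  · intro i j hij
    obtain ⟨a, ha, b, hb, hab⟩ := hadj i j hij
    obtain ⟨x, hx, y, hy, hxy⟩ := h3 a b hab
    exact ⟨x, Set.mem_biUnion ha hx, y, Set.mem_biUnion hb hy, hxy⟩


lemma master_del {G : SimpleGraph V} {v t : V} (htv : G.Adj t v)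
    (G' : SimpleGraph {w : V // w ≠ v})
    (h3 : ∀ a b : {w : V // w ≠ v}, G'.Adj a b →
      G.Adj ↑a ↑b ∨ ((a : V) = t ∧ G.Adj v ↑b) ∨ ((b : V) = t ∧ G.Adj ↑a v))
    (h : K4S G') : K4S G := by
  have hmem : ∀ p : {w : V // w ≠ v},
      (p : V) ∈ (if (p : V) = t then ({t, v} : Set V) else {(p : V)}) := by
    intro p
    split
    · rename_i h; rw [h]; exact Or.inl rfl
    · rfl
  apply master (fun p : {w : V // w ≠ v} => if (p : V) = t then ({t, v} : Set V) else {(p : V)}) ?_ ?_ ?_ h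
  · intro a
    split
    · exact goodset_pair htv
    · exact goodset_singleton G _
  · intro a b hab
    have hval : (a : V) ≠ (b : V) := fun h => hab (Subtype.ext h)
    rw [Set.disjoint_left]
    intro x hx hx'
    revert hx hx'
    split <;> split <;> rename_i h1 h2
    · intro _ _; exact hval (h1.trans h2.symm)
    · rintro (rfl | rfl) h'
      · exact h2 h'.symm
      · exact b.2 h'.symm
    · rintro rfl (h' | h')
      · exact h1 h'
      · exact a.2 h'
    · rintro rfl h'; exact hval h'
  · intro a b hab
    rcases h3 a b hab with hre | ⟨hat, hvb⟩ | ⟨hbt, hav⟩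
    · exact ⟨a, hmem a, b, hmem b, hre⟩
    · refine ⟨v, ?_, b, hmem b, hvb⟩
      rw [if_pos hat]; exact Or.inr rfl
    · refine ⟨a, hmem a, v, ?_, hav⟩
      rw [if_pos hbt]; exact Or.inr rfl

lemma k4s_induce {G : SimpleGraph V} {C : Set V} (h : K4S (G.induce C)) : K4S G := by
  apply master (fun p : C => {(p : V)}) (fun a => goodset_singleton G _) ?_ ?_ h
  · intro a b hab
    rw [Set.disjoint_left]
    intro x h1 h2
    exact hab (Subtype.ext (h1.symm.trans h2))
  · intro a b hab
    exact ⟨a, rfl, b, rfl, hab⟩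

lemma lk_mem_right {G : SimpleGraph V} {S : Set V} {a b : V} (h : Lk G S a b) (ha : a ∈ S) :
    b ∈ S := by
  induction h with
  | refl => exact ha
  | tail _ h2 _ => exact h2.2.1

/-- the component of `y` within `S` -/
def Comp (G : SimpleGraph V) (S : Set V) (y : V) : Set V := {w | Lk G S y w}

lemma mem_comp_self (G : SimpleGraph V) (S : Set V) (y : V) : y ∈ Comp G S y :=
  Relation.ReflTransGen.refl

lemma comp_subset {G : SimpleGraph V} {S : Set V} {y : V} (hy : y ∈ S) :
    Comp G S y ⊆ S := fun _ hw => lk_mem_right hw hy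

lemma comp_closed {G : SimpleGraph V} {S : Set V} {y : V} {w m : V}
    (hw : w ∈ Comp G S y) (hwS : w ∈ S) (hm : m ∈ S) (hadj : G.Adj w m) :
    m ∈ Comp G S y :=
  Relation.ReflTransGen.tail hw ⟨hwS, hm, hadj⟩

lemma goodset_comp {G : SimpleGraph V} {S : Set V} {y : V} (hy : y ∈ S) :
    GoodSet G (Comp G S y) := by
  have key : ∀ w ∈ Comp G S y, Lk G (Comp G S y) y w := by
    intro w hw
    induction hw with
    | refl => exact Relation.ReflTransGen.refl
    | @tail c d h1 h2 ih =>
      exact ih.tail ⟨h1, Relation.ReflTransGen.tail h1 h2, h2.2.2⟩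
  exact ⟨⟨y, mem_comp_self G S y⟩, fun a ha b hb => (lk_symm (key a ha)).trans (key b hb)⟩

/-- Extraction of a last exit edge towards `y`. -/
lemma reach_exit {G : SimpleGraph V} {S : Set V} {y z b : V}
    (h : Lk G S z b) (hz1 : z ∈ S) (hz2 : z ≠ y) :
    (∃ s, Lk G (S \ {y}) z s ∧ G.Adj s y) ∨ Lk G (S \ {y}) z b := by
  induction h with
  | refl => exact Or.inr Relation.ReflTransGen.refl
  | @tail c d h1 h2 ih =>
    rcases ih with hdone | hcl
    · exact Or.inl hdone
    · have hc : c ∈ S \ {y} := lk_mem_right hcl ⟨hz1, hz2⟩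
      by_cases hd : d = y
      · exact Or.inl ⟨c, hcl, hd ▸ h2.2.2⟩
      · exact Or.inr (hcl.tail ⟨hc, ⟨h2.2.1, hd⟩, h2.2.2⟩)


lemma exsym {G : SimpleGraph V} {A B : Set V} (h : ∃ a ∈ A, ∃ b ∈ B, G.Adj a b) :
    ∃ b ∈ B, ∃ a ∈ A, G.Adj b a := by
  obtain ⟨a, ha, b, hb, hab⟩ := h
  exact ⟨b, hb, a, ha, hab.symm⟩

lemma k4s_of_sets {G : SimpleGraph V} {A B C D : Set V}
    (gA : GoodSet G A) (gB : GoodSet G B) (gC : GoodSet G C) (gD : GoodSet G D)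
    (dAB : Disjoint A B) (dAC : Disjoint A C) (dAD : Disjoint A D)
    (dBC : Disjoint B C) (dBD : Disjoint B D) (dCD : Disjoint C D)
    (eAB : ∃ a ∈ A, ∃ b ∈ B, G.Adj a b) (eAC : ∃ a ∈ A, ∃ b ∈ C, G.Adj a b)
    (eAD : ∃ a ∈ A, ∃ b ∈ D, G.Adj a b) (eBC : ∃ a ∈ B, ∃ b ∈ C, G.Adj a b)
    (eBD : ∃ a ∈ B, ∃ b ∈ D, G.Adj a b) (eCD : ∃ a ∈ C, ∃ b ∈ D, G.Adj a b) :
    K4S G := by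
  have eBA := exsym eAB; have eCA := exsym eAC; have eDA := exsym eAD
  have eCB := exsym eBC; have eDB := exsym eBD; have eDC := exsym eCD
  refine ⟨![A, B, C, D], ?_, ?_, ?_⟩
  · intro i; fin_cases i <;> assumption
  · intro i j hij
    fin_cases i <;> fin_cases j <;>
      first
        | exact absurd rfl hij
        | exact dAB | exact dAB.symm | exact dAC | exact dAC.symm
        | exact dAD | exact dAD.symm | exact dBC | exact dBC.symm
        | exact dBD | exact dBD.symm | exact dCD | exact dCD.symm
  · intro i j hij
    fin_cases i <;> fin_cases j <;>
      first
        | exact absurd rfl hij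
        | exact eAB | exact eBA | exact eAC | exact eCA
        | exact eAD | exact eDA | exact eBC | exact eCB
        | exact eBD | exact eDB | exact eCD | exact eDC

lemma disj_singletons {a b : V} (h : a ≠ b) : Disjoint ({a} : Set V) {b} := by
  rw [Set.disjoint_left]; rintro x rfl hx; exact h hx

lemma ex_singletons {G : SimpleGraph V} {a b : V} (h : G.Adj a b) :
    ∃ x ∈ ({a} : Set V), ∃ y ∈ ({b} : Set V), G.Adj x y := ⟨a, rfl, b, rfl, h⟩

lemma k4_of_four {G : SimpleGraph V} {a b c d : V}
    (hab : G.Adj a b) (hac : G.Adj a c) (had : G.Adj a d)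
    (hbc : G.Adj b c) (hbd : G.Adj b d) (hcd : G.Adj c d) : K4S G :=
  k4s_of_sets (goodset_singleton G a) (goodset_singleton G b) (goodset_singleton G c)
    (goodset_singleton G d)
    (disj_singletons hab.ne) (disj_singletons hac.ne) (disj_singletons had.ne)
    (disj_singletons hbc.ne) (disj_singletons hbd.ne) (disj_singletons hcd.ne)
    (ex_singletons hab) (ex_singletons hac) (ex_singletons had)
    (ex_singletons hbc) (ex_singletons hbd) (ex_singletons hcd)

lemma three_le_ncard_of {S : Set V} (hfin : S.Finite) {a b c : V}
    (ha : a ∈ S) (hb : b ∈ S) (hc : c ∈ S) (hab : a ≠ b) (hac : a ≠ c) (hbc : b ≠ c) :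
    3 ≤ S.ncard :=
  (Set.two_lt_ncard hfin).mpr ⟨a, ha, b, hb, c, hc, hab, hac, hbc⟩

lemma exists_three {S : Set V} (hfin : S.Finite) (h : 3 ≤ S.ncard) :
    ∃ a ∈ S, ∃ b ∈ S, ∃ c ∈ S, a ≠ b ∧ a ≠ c ∧ b ≠ c :=
  (Set.two_lt_ncard hfin).mp h

lemma exists_three_diff {S : Set V} (hfin : S.Finite) (h : 4 ≤ S.ncard) (v : V) :
    ∃ a ∈ S, ∃ b ∈ S, ∃ c ∈ S, (a ≠ b ∧ a ≠ c ∧ b ≠ c) ∧ a ≠ v ∧ b ≠ v ∧ c ≠ v := by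
  have h2 : 3 ≤ (S \ {v}).ncard := by
    have := Set.pred_ncard_le_ncard_diff_singleton S v
    omega
  obtain ⟨a, ha, b, hb, c, hc, hne⟩ := exists_three hfin.diff h2
  exact ⟨a, ha.1, b, hb.1, c, hc.1, hne, ha.2, hb.2, hc.2⟩

lemma exists_two_diff {S : Set V} (hfin : S.Finite) (h : 3 ≤ S.ncard) (v : V) :
    ∃ a ∈ S, ∃ b ∈ S, a ≠ b ∧ a ≠ v ∧ b ≠ v := by
  have h2 : 2 ≤ (S \ {v}).ncard := by
    have := Set.pred_ncard_le_ncard_diff_singleton S v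
    omega
  obtain ⟨a, ha, b, hb, hne⟩ := (Set.one_lt_ncard hfin.diff).mp h2
  exact ⟨a, ha.1, b, hb.1, hne, ha.2, hb.2⟩

/-- exhibit three distinct neighbors in a graph on a subtype -/
lemma three_nbrs {q : V → Prop} [Fintype V] {G' : SimpleGraph {w : V // q w}}
    {p : {w : V // q w}} {m1 m2 m3 : {w : V // q w}}
    (h12 : (m1 : V) ≠ m2) (h13 : (m1 : V) ≠ m3) (h23 : (m2 : V) ≠ m3)
    (ha1 : G'.Adj p m1) (ha2 : G'.Adj p m2) (ha3 : G'.Adj p m3) :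
    3 ≤ (G'.neighborSet p).ncard := by
  have h := three_le_ncard_of (S := Subtype.val '' (G'.neighborSet p))
    (Set.toFinite _) ⟨m1, ha1, rfl⟩ ⟨m2, ha2, rfl⟩ ⟨m3, ha3, rfl⟩ h12 h13 h23
  rwa [Set.ncard_image_of_injective _ Subtype.val_injective] at h


lemma svne {v : V} {p q : {w : V // w ≠ v}} (h : (p : V) ≠ (q : V)) : p ≠ q :=
  fun hh => h (congrArg Subtype.val hh)

universe u

/-- induction oracle -/
def Oracle (n : ℕ) : Prop :=
  ∀ (W : Type u) [Fintype W] (H : SimpleGraph W) (a : W), Fintype.card W ≤ n →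
    (∃ b, H.Adj a b) → (∀ w, w ≠ a → 3 ≤ (H.neighborSet w).ncard) → K4S H

lemma card_del {V : Type u} [Fintype V] (v : V) {n : ℕ} (h : Fintype.card V ≤ n + 1) :
    Fintype.card {w : V // w ≠ v} ≤ n := by
  have h2 : Fintype.card {w : V // w ≠ v} < Fintype.card V := by
    simpa using Fintype.card_subtype_lt (p := fun w : V => w ≠ v) (x := v) (by simp)
  omega

lemma caseB {V : Type u} [Fintype V] (G : SimpleGraph V) {n : ℕ}
    (oracle : Oracle.{u} n) (hcard : Fintype.card V ≤ n + 1)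
    {a v x y z : V}
    (hdeg1 : ∃ b, G.Adj a b) (hdeg3 : ∀ w, w ≠ a → 3 ≤ (G.neighborSet w).ncard)
    (hva : v ≠ a) (hN : G.neighborSet v = {x, y, z})
    (hxy0 : x ≠ y) (hxz0 : x ≠ z)
    (hxy : ¬ G.Adj x y) (hxz : ¬ G.Adj x z) : K4S G := by
  have hvx : G.Adj v x := by rw [← SimpleGraph.mem_neighborSet, hN]; exact Or.inl rfl
  have hvy : G.Adj v y := by rw [← SimpleGraph.mem_neighborSet, hN]; exact Or.inr (Or.inl rfl)
  have hvz : G.Adj v z := by rw [← SimpleGraph.mem_neighborSet, hN]; exact Or.inr (Or.inr rfl)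
  let G' : SimpleGraph {w : V // w ≠ v} :=
    { Adj := fun p q => p ≠ q ∧ (G.Adj ↑p ↑q ∨
        ((p : V) = x ∧ ((q : V) = y ∨ (q : V) = z)) ∨
        ((q : V) = x ∧ ((p : V) = y ∨ (p : V) = z)))
      symm := by
        constructor; rintro p q ⟨h1, h2⟩
        refine ⟨h1.symm, ?_⟩
        rcases h2 with h | h | h
        · exact Or.inl h.symm
        · exact Or.inr (Or.inr h)
        · exact Or.inr (Or.inl h)
      loopless := ⟨fun p h => h.1 rfl⟩ }
  have hane : a ≠ v := Ne.symm hva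
  have hdeg1' : ∃ q, G'.Adj ⟨a, hane⟩ q := by
    obtain ⟨b0, hb0⟩ := hdeg1
    by_cases hb0v : b0 = v
    · have haN : a ∈ G.neighborSet v := (hb0v ▸ hb0).symm
      rw [hN] at haN
      rcases haN with rfl | rfl | rfl
      · exact ⟨⟨y, hvy.ne'⟩, svne hxy0, Or.inr (Or.inl ⟨rfl, Or.inl rfl⟩)⟩
      · exact ⟨⟨x, hvx.ne'⟩, svne (Ne.symm hxy0), Or.inr (Or.inr ⟨rfl, Or.inl rfl⟩)⟩
      · exact ⟨⟨x, hvx.ne'⟩, svne (Ne.symm hxz0), Or.inr (Or.inr ⟨rfl, Or.inr rfl⟩)⟩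
    · exact ⟨⟨b0, hb0v⟩, svne hb0.ne, Or.inl hb0⟩
  have hdeg3' : ∀ p, p ≠ (⟨a, hane⟩ : {w : V // w ≠ v}) → 3 ≤ (G'.neighborSet p).ncard := by
    intro p hpa
    have hpa' : (p : V) ≠ a := fun h => hpa (Subtype.ext h)
    by_cases hpx : (p : V) = x
    · obtain ⟨n1, hn1, n2, hn2, hn12, hn1v, hn2v⟩ :=
        exists_two_diff (Set.toFinite _) (hdeg3 x (hpx ▸ hpa')) v
      refine three_nbrs (G' := G') (p := p) (m1 := ⟨n1, hn1v⟩) (m2 := ⟨n2, hn2v⟩)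
        (m3 := ⟨y, hvy.ne'⟩) hn12 (show n1 ≠ y from fun h => hxy (by rw [← h]; exact hn1))
        (show n2 ≠ y from fun h => hxy (by rw [← h]; exact hn2)) ?_ ?_ ?_
      · exact ⟨svne (by rw [hpx]; exact hn1.ne), Or.inl (by rw [hpx]; exact hn1)⟩
      · exact ⟨svne (by rw [hpx]; exact hn2.ne), Or.inl (by rw [hpx]; exact hn2)⟩
      · exact ⟨svne (by rw [hpx]; exact hxy0), Or.inr (Or.inl ⟨hpx, Or.inl rfl⟩)⟩
    by_cases hpy : (p : V) = y
    · obtain ⟨n1, hn1, n2, hn2, hn12, hn1v, hn2v⟩ :=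
        exists_two_diff (Set.toFinite _) (hdeg3 y (hpy ▸ hpa')) v
      refine three_nbrs (G' := G') (p := p) (m1 := ⟨n1, hn1v⟩) (m2 := ⟨n2, hn2v⟩)
        (m3 := ⟨x, hvx.ne'⟩) hn12
        (show n1 ≠ x from fun h => hxy (by rw [← h]; exact hn1.symm))
        (show n2 ≠ x from fun h => hxy (by rw [← h]; exact hn2.symm)) ?_ ?_ ?_
      · exact ⟨svne (by rw [hpy]; exact hn1.ne), Or.inl (by rw [hpy]; exact hn1)⟩
      · exact ⟨svne (by rw [hpy]; exact hn2.ne), Or.inl (by rw [hpy]; exact hn2)⟩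
      · exact ⟨svne (by rw [hpy]; exact Ne.symm hxy0), Or.inr (Or.inr ⟨rfl, Or.inl hpy⟩)⟩
    by_cases hpz : (p : V) = z
    · obtain ⟨n1, hn1, n2, hn2, hn12, hn1v, hn2v⟩ :=
        exists_two_diff (Set.toFinite _) (hdeg3 z (hpz ▸ hpa')) v
      refine three_nbrs (G' := G') (p := p) (m1 := ⟨n1, hn1v⟩) (m2 := ⟨n2, hn2v⟩)
        (m3 := ⟨x, hvx.ne'⟩) hn12
        (show n1 ≠ x from fun h => hxz (by rw [← h]; exact hn1.symm))
        (show n2 ≠ x from fun h => hxz (by rw [← h]; exact hn2.symm)) ?_ ?_ ?_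
      · exact ⟨svne (by rw [hpz]; exact hn1.ne), Or.inl (by rw [hpz]; exact hn1)⟩
      · exact ⟨svne (by rw [hpz]; exact hn2.ne), Or.inl (by rw [hpz]; exact hn2)⟩
      · exact ⟨svne (by rw [hpz]; exact Ne.symm hxz0), Or.inr (Or.inr ⟨rfl, Or.inr hpz⟩)⟩
    · have hpv : ¬ G.Adj (p : V) v := by
        intro h
        have : (p : V) ∈ G.neighborSet v := h.symm
        rw [hN] at this
        rcases this with h' | h' | h' <;> [exact hpx h'; exact hpy h'; exact hpz h']
      obtain ⟨n1, hn1, n2, hn2, n3, hn3, h12, h13, h23⟩ :=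
        exists_three (Set.toFinite _) (hdeg3 (p : V) hpa')
      have e1 : n1 ≠ v := fun h => hpv (h ▸ hn1)
      have e2 : n2 ≠ v := fun h => hpv (h ▸ hn2)
      have e3 : n3 ≠ v := fun h => hpv (h ▸ hn3)
      exact three_nbrs (G' := G') (p := p) (m1 := ⟨n1, e1⟩) (m2 := ⟨n2, e2⟩) (m3 := ⟨n3, e3⟩)
        h12 h13 h23 ⟨svne hn1.ne, Or.inl hn1⟩ ⟨svne hn2.ne, Or.inl hn2⟩
        ⟨svne hn3.ne, Or.inl hn3⟩
  have hK' : K4S G' := oracle _ G' ⟨a, hane⟩ (card_del v hcard) hdeg1' hdeg3'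
  refine master_del hvx.symm G' ?_ hK'
  intro p q hpq
  rcases hpq.2 with h | ⟨h1, h2⟩ | ⟨h1, h2⟩
  · exact Or.inl h
  · refine Or.inr (Or.inl ⟨h1, ?_⟩)
    rcases h2 with h' | h' <;> rw [h'] <;> [exact hvy; exact hvz]
  · refine Or.inr (Or.inr ⟨h1, ?_⟩)
    rcases h2 with h' | h' <;> rw [h'] <;> [exact hvy.symm; exact hvz.symm]


lemma caseC1 {V : Type u} [Fintype V] (G : SimpleGraph V) {n : ℕ}
    (oracle : Oracle.{u} n) (hcard : Fintype.card V ≤ n + 1)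
    {a v x y z : V}
    (hdeg1 : ∃ b, G.Adj a b) (hdeg3 : ∀ w, w ≠ a → 3 ≤ (G.neighborSet w).ncard)
    (hva : v ≠ a) (hN : G.neighborSet v = {x, y, z})
    (hxy0 : x ≠ y) (hxz0 : x ≠ z) (hyz0 : y ≠ z)
    (hxy : G.Adj x y) (hxz : G.Adj x z) (hyz : ¬ G.Adj y z)
    (hx4 : x = a ∨ (G.neighborSet x).ncard ≠ 3) : K4S G := by
  have hvx : G.Adj v x := by rw [← SimpleGraph.mem_neighborSet, hN]; exact Or.inl rfl
  have hvy : G.Adj v y := by rw [← SimpleGraph.mem_neighborSet, hN]; exact Or.inr (Or.inl rfl)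
  have hvz : G.Adj v z := by rw [← SimpleGraph.mem_neighborSet, hN]; exact Or.inr (Or.inr rfl)
  let G' : SimpleGraph {w : V // w ≠ v} :=
    { Adj := fun p q => p ≠ q ∧ (G.Adj ↑p ↑q ∨
        ((p : V) = y ∧ (q : V) = z) ∨ ((q : V) = y ∧ (p : V) = z))
      symm := by
        constructor; rintro p q ⟨h1, h2⟩
        refine ⟨h1.symm, ?_⟩
        rcases h2 with h | h | h
        · exact Or.inl h.symm
        · exact Or.inr (Or.inr h)
        · exact Or.inr (Or.inl h)
      loopless := ⟨fun p h => h.1 rfl⟩ }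
  have hane : a ≠ v := Ne.symm hva
  have hdeg1' : ∃ q, G'.Adj ⟨a, hane⟩ q := by
    obtain ⟨b0, hb0⟩ := hdeg1
    by_cases hb0v : b0 = v
    · have haN : a ∈ G.neighborSet v := (hb0v ▸ hb0).symm
      rw [hN] at haN
      rcases haN with rfl | rfl | rfl
      · exact ⟨⟨y, hvy.ne'⟩, svne hxy.ne, Or.inl hxy⟩
      · exact ⟨⟨z, hvz.ne'⟩, svne hyz0, Or.inr (Or.inl ⟨rfl, rfl⟩)⟩
      · exact ⟨⟨y, hvy.ne'⟩, svne (Ne.symm hyz0), Or.inr (Or.inr ⟨rfl, rfl⟩)⟩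
    · exact ⟨⟨b0, hb0v⟩, svne hb0.ne, Or.inl hb0⟩
  have hdeg3' : ∀ p, p ≠ (⟨a, hane⟩ : {w : V // w ≠ v}) → 3 ≤ (G'.neighborSet p).ncard := by
    intro p hpa
    have hpa' : (p : V) ≠ a := fun h => hpa (Subtype.ext h)
    by_cases hpy : (p : V) = y
    · obtain ⟨n1, hn1, n2, hn2, hn12, hn1v, hn2v⟩ :=
        exists_two_diff (Set.toFinite _) (hdeg3 y (hpy ▸ hpa')) v
      refine three_nbrs (G' := G') (p := p) (m1 := ⟨n1, hn1v⟩) (m2 := ⟨n2, hn2v⟩)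
        (m3 := ⟨z, hvz.ne'⟩) hn12 (show n1 ≠ z from fun h => hyz (by rw [← h]; exact hn1))
        (show n2 ≠ z from fun h => hyz (by rw [← h]; exact hn2)) ?_ ?_ ?_
      · exact ⟨svne (by rw [hpy]; exact hn1.ne), Or.inl (by rw [hpy]; exact hn1)⟩
      · exact ⟨svne (by rw [hpy]; exact hn2.ne), Or.inl (by rw [hpy]; exact hn2)⟩
      · exact ⟨svne (by rw [hpy]; exact hyz0), Or.inr (Or.inl ⟨hpy, rfl⟩)⟩
    by_cases hpz : (p : V) = z
    · obtain ⟨n1, hn1, n2, hn2, hn12, hn1v, hn2v⟩ :=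
        exists_two_diff (Set.toFinite _) (hdeg3 z (hpz ▸ hpa')) v
      refine three_nbrs (G' := G') (p := p) (m1 := ⟨n1, hn1v⟩) (m2 := ⟨n2, hn2v⟩)
        (m3 := ⟨y, hvy.ne'⟩) hn12 (show n1 ≠ y from fun h => hyz (by rw [← h]; exact hn1.symm))
        (show n2 ≠ y from fun h => hyz (by rw [← h]; exact hn2.symm)) ?_ ?_ ?_
      · exact ⟨svne (by rw [hpz]; exact hn1.ne), Or.inl (by rw [hpz]; exact hn1)⟩
      · exact ⟨svne (by rw [hpz]; exact hn2.ne), Or.inl (by rw [hpz]; exact hn2)⟩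
      · exact ⟨svne (by rw [hpz]; exact Ne.symm hyz0), Or.inr (Or.inr ⟨rfl, hpz⟩)⟩
    by_cases hpx : (p : V) = x
    · have hxa : x ≠ a := hpx ▸ hpa'
      have h4 : 4 ≤ (G.neighborSet x).ncard := by
        rcases hx4 with h | h
        · exact absurd h hxa
        · have := hdeg3 x hxa; omega
      obtain ⟨n1, hn1, n2, hn2, n3, hn3, ⟨h12, h13, h23⟩, e1, e2, e3⟩ :=
        exists_three_diff (Set.toFinite _) h4 v
      refine three_nbrs (G' := G') (p := p) (m1 := ⟨n1, e1⟩) (m2 := ⟨n2, e2⟩) (m3 := ⟨n3, e3⟩)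
        h12 h13 h23 ?_ ?_ ?_
      · exact ⟨svne (by rw [hpx]; exact hn1.ne), Or.inl (by rw [hpx]; exact hn1)⟩
      · exact ⟨svne (by rw [hpx]; exact hn2.ne), Or.inl (by rw [hpx]; exact hn2)⟩
      · exact ⟨svne (by rw [hpx]; exact hn3.ne), Or.inl (by rw [hpx]; exact hn3)⟩
    · have hpv : ¬ G.Adj (p : V) v := by
        intro h
        have : (p : V) ∈ G.neighborSet v := h.symm
        rw [hN] at this
        rcases this with h' | h' | h' <;> [exact hpx h'; exact hpy h'; exact hpz h']
      obtain ⟨n1, hn1, n2, hn2, n3, hn3, h12, h13, h23⟩ :=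
        exists_three (Set.toFinite _) (hdeg3 (p : V) hpa')
      have e1 : n1 ≠ v := fun h => hpv (h ▸ hn1)
      have e2 : n2 ≠ v := fun h => hpv (h ▸ hn2)
      have e3 : n3 ≠ v := fun h => hpv (h ▸ hn3)
      exact three_nbrs (G' := G') (p := p) (m1 := ⟨n1, e1⟩) (m2 := ⟨n2, e2⟩) (m3 := ⟨n3, e3⟩)
        h12 h13 h23 ⟨svne hn1.ne, Or.inl hn1⟩ ⟨svne hn2.ne, Or.inl hn2⟩
        ⟨svne hn3.ne, Or.inl hn3⟩
  have hK' : K4S G' := oracle _ G' ⟨a, hane⟩ (card_del v hcard) hdeg1' hdeg3'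
  refine master_del hvy.symm G' ?_ hK'
  intro p q hpq
  rcases hpq.2 with h | ⟨h1, h2⟩ | ⟨h1, h2⟩
  · exact Or.inl h
  · exact Or.inr (Or.inl ⟨h1, by rw [h2]; exact hvz⟩)
  · exact Or.inr (Or.inr ⟨h1, by rw [h2]; exact hvz.symm⟩)

lemma caseC2comp {V : Type u} [Fintype V] (G : SimpleGraph V) {n : ℕ}
    (oracle : Oracle.{u} n) (hcard : Fintype.card V ≤ n + 1)
    {a v x y z : V}
    (hdeg3 : ∀ w, w ≠ a → 3 ≤ (G.neighborSet w).ncard)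
    (hNv : G.neighborSet v = {x, y, z}) (hNx : G.neighborSet x = {v, y, z})
    (hxy0 : x ≠ y)
    (hur : ¬ Lk G (({v, x} : Set V)ᶜ) y z)
    (hac : a ∉ Comp G (({v, x} : Set V)ᶜ) y) : K4S G := by
  have hvy : G.Adj v y := by rw [← SimpleGraph.mem_neighborSet, hNv]; exact Or.inr (Or.inl rfl)
  have hvz : G.Adj v z := by rw [← SimpleGraph.mem_neighborSet, hNv]; exact Or.inr (Or.inr rfl)
  have hxy : G.Adj x y := by rw [← SimpleGraph.mem_neighborSet, hNx]; exact Or.inr (Or.inl rfl)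
  have hxz : G.Adj x z := by rw [← SimpleGraph.mem_neighborSet, hNx]; exact Or.inr (Or.inr rfl)
  set S : Set V := ({v, x} : Set V)ᶜ with hS
  have hyS : y ∈ S := by
    simp only [hS, Set.mem_compl_iff, Set.mem_insert_iff, Set.mem_singleton_iff]
    push_neg
    exact ⟨hvy.ne', Ne.symm hxy0⟩
  set C : Set V := Comp G S y with hC
  have hyC : y ∈ C := mem_comp_self G S y
  have hCS : C ⊆ S := comp_subset hyS
  have hvC : v ∉ C := fun h => (hCS h) (Or.inl rfl)
  have hxC : x ∉ C := fun h => (hCS h) (Or.inr rfl)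
  have hzC : z ∉ C := fun h => hur h
  have hyna : y ≠ a := fun h => hac (h ▸ hyC)
  have hclose : ∀ p ∈ C, p ≠ y → ∀ m, G.Adj p m → m ∈ C := by
    intro p hp hpy m hm
    have hmv : m ≠ v := by
      intro heq
      have : p ∈ G.neighborSet v := by rw [heq] at hm; exact hm.symm
      rw [hNv] at this
      rcases this with h' | h' | h'
      · exact hxC (h' ▸ hp)
      · exact hpy h'
      · exact hzC (h' ▸ hp)
    have hmx : m ≠ x := by
      intro heq
      have : p ∈ G.neighborSet x := by rw [heq] at hm; exact hm.symm
      rw [hNx] at this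
      rcases this with h' | h' | h'
      · exact hvC (h' ▸ hp)
      · exact hpy h'
      · exact hzC (h' ▸ hp)
    have hmS : m ∈ S := by
      simp only [hS, Set.mem_compl_iff, Set.mem_insert_iff, Set.mem_singleton_iff]
      push_neg
      exact ⟨hmv, hmx⟩
    exact comp_closed hp (hCS hp) hmS hm
  -- apply the oracle to the induced graph on C
  have hcardC : Fintype.card ↥C ≤ n := by
    have h2 : Fintype.card ↥C < Fintype.card V := by
      refine Fintype.card_lt_of_injective_of_notMem (b := v) Subtype.val Subtype.val_injective ?_
      intro hmem
      obtain ⟨w, hw⟩ := hmem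
      exact hvC (hw ▸ w.2)
    omega
  have hdeg1' : ∃ q, (G.induce C).Adj ⟨y, hyC⟩ q := by
    obtain ⟨n1, hn1, n2, hn2, hn12, hn1v, hn2v⟩ :=
      exists_two_diff (Set.toFinite _) (hdeg3 y hyna) v
    have mem : ∀ m, G.Adj y m → m ≠ v → m ≠ x → m ∈ C := by
      intro m hm h1 h2
      refine comp_closed hyC hyS ?_ hm
      simp only [hS, Set.mem_compl_iff, Set.mem_insert_iff, Set.mem_singleton_iff]
      push_neg
      exact ⟨h1, h2⟩
    by_cases h1x : n1 = x
    · exact ⟨⟨n2, mem n2 hn2 hn2v (fun h => hn12 (h1x.trans h.symm))⟩, hn2⟩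
    · exact ⟨⟨n1, mem n1 hn1 hn1v h1x⟩, hn1⟩
  have hdeg3' : ∀ p : ↥C, p ≠ (⟨y, hyC⟩ : ↥C) → 3 ≤ ((G.induce C).neighborSet p).ncard := by
    intro p hp
    have hpy : (p : V) ≠ y := fun h => hp (Subtype.ext h)
    have hpa : (p : V) ≠ a := fun h => hac (h ▸ p.2)
    obtain ⟨n1, hn1, n2, hn2, n3, hn3, h12, h13, h23⟩ :=
      exists_three (Set.toFinite _) (hdeg3 (p : V) hpa)
    have c1 : n1 ∈ C := hclose (p : V) p.2 hpy n1 hn1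
    have c2 : n2 ∈ C := hclose (p : V) p.2 hpy n2 hn2
    have c3 : n3 ∈ C := hclose (p : V) p.2 hpy n3 hn3
    exact three_nbrs (G' := G.induce C) (p := p) (m1 := ⟨n1, c1⟩) (m2 := ⟨n2, c2⟩)
      (m3 := ⟨n3, c3⟩) h12 h13 h23 hn1 hn2 hn3
  exact k4s_induce (oracle _ (G.induce C) ⟨y, hyC⟩ hcardC hdeg1' hdeg3')


lemma caseC {V : Type u} [Fintype V] (G : SimpleGraph V) {n : ℕ}
    (oracle : Oracle.{u} n) (hcard : Fintype.card V ≤ n + 1)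
    {a v x y z : V}
    (hdeg1 : ∃ b, G.Adj a b) (hdeg3 : ∀ w, w ≠ a → 3 ≤ (G.neighborSet w).ncard)
    (hva : v ≠ a) (hN : G.neighborSet v = {x, y, z})
    (hxy0 : x ≠ y) (hxz0 : x ≠ z) (hyz0 : y ≠ z)
    (hxy : G.Adj x y) (hxz : G.Adj x z) (hyz : ¬ G.Adj y z) : K4S G := by
  have hvx : G.Adj v x := by rw [← SimpleGraph.mem_neighborSet, hN]; exact Or.inl rfl
  have hvy : G.Adj v y := by rw [← SimpleGraph.mem_neighborSet, hN]; exact Or.inr (Or.inl rfl)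
  have hvz : G.Adj v z := by rw [← SimpleGraph.mem_neighborSet, hN]; exact Or.inr (Or.inr rfl)
  by_cases hx4 : x = a ∨ (G.neighborSet x).ncard ≠ 3
  · exact caseC1 G oracle hcard hdeg1 hdeg3 hva hN hxy0 hxz0 hyz0 hxy hxz hyz hx4
  push_neg at hx4
  obtain ⟨hxa, hx3⟩ := hx4
  have hNx : G.neighborSet x = {v, y, z} := by
    refine (Set.eq_of_subset_of_ncard_le ?_ ?_ (Set.toFinite _)).symm
    · rintro w (rfl | rfl | rfl)
      exacts [hvx.symm, hxy, hxz]
    · rw [hx3]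
      exact three_le_ncard_of (Set.toFinite _) (Or.inl rfl) (Or.inr (Or.inl rfl))
        (Or.inr (Or.inr rfl)) hvy.ne hvz.ne hyz0
  by_cases hreach : Lk G (({v, x} : Set V)ᶜ) y z
  · -- a K4 minor exists directly
    have hz1 : z ∈ (({v, x} : Set V)ᶜ) := by
      simp only [Set.mem_compl_iff, Set.mem_insert_iff, Set.mem_singleton_iff]
      push_neg
      exact ⟨hvz.ne', Ne.symm hxz0⟩
    have hzy : z ≠ y := Ne.symm hyz0
    rcases reach_exit (lk_symm hreach) hz1 hzy with ⟨s, hs1, hs2⟩ | hclean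
    · have hzD : z ∈ Comp G ((({v, x} : Set V)ᶜ) \ {y}) z := mem_comp_self _ _ _
      have hsD : s ∈ Comp G ((({v, x} : Set V)ᶜ) \ {y}) z := hs1
      have hDsub : Comp G ((({v, x} : Set V)ᶜ) \ {y}) z ⊆ (({v, x} : Set V)ᶜ) \ {y} :=
        comp_subset ⟨hz1, hzy⟩
      refine k4s_of_sets (goodset_singleton G v) (goodset_singleton G x)
        (goodset_singleton G y)
        (goodset_comp (S := (({v, x} : Set V)ᶜ) \ {y}) (y := z) ⟨hz1, hzy⟩)
        (disj_singletons hvx.ne) (disj_singletons hvy.ne) ?_ (disj_singletons hxy0) ?_ ?_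
        (ex_singletons hvx) (ex_singletons hvy) ⟨v, rfl, z, hzD, hvz⟩
        (ex_singletons hxy) ⟨x, rfl, z, hzD, hxz⟩ ⟨y, rfl, s, hsD, hs2.symm⟩
      · rw [Set.disjoint_left]; rintro w rfl hw; exact (hDsub hw).1 (Or.inl rfl)
      · rw [Set.disjoint_left]; rintro w rfl hw; exact (hDsub hw).1 (Or.inr rfl)
      · rw [Set.disjoint_left]; rintro w rfl hw; exact (hDsub hw).2 rfl
    · exact absurd rfl ((lk_mem_right hclean ⟨hz1, hzy⟩).2)
  · by_cases haC : a ∈ Comp G (({v, x} : Set V)ᶜ) y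
    · have hNv' : G.neighborSet v = {x, z, y} :=
        hN.trans (congrArg (insert x) (Set.pair_comm y z))
      have hNx' : G.neighborSet x = {v, z, y} :=
        hNx.trans (congrArg (insert v) (Set.pair_comm y z))
      refine caseC2comp G oracle hcard hdeg3 hNv' hNx' hxz0 (fun h => hreach (lk_symm h)) ?_
      intro h
      exact hreach ((haC : Lk _ _ y a).trans (lk_symm (h : Lk _ _ z a)))
    · exact caseC2comp G oracle hcard hdeg3 hN hNx hxy0 hreach haC

lemma key : ∀ (n : ℕ), Oracle.{u} n := by
  intro n
  induction n with
  | zero =>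
    intro W _ H a hcard _ _
    have : 0 < Fintype.card W := Fintype.card_pos_iff.mpr ⟨a⟩
    omega
  | succ n ih =>
    intro W _ G a hcard hdeg1 hdeg3
    by_cases hex : ∃ v, v ≠ a ∧ (G.neighborSet v).ncard = 3
    · obtain ⟨v, hva, hv3⟩ := hex
      obtain ⟨x, y, z, hxy0, hxz0, hyz0, hN⟩ := Set.ncard_eq_three.mp hv3
      have hvx : G.Adj v x := by rw [← SimpleGraph.mem_neighborSet, hN]; exact Or.inl rfl
      have hvy : G.Adj v y := by
        rw [← SimpleGraph.mem_neighborSet, hN]; exact Or.inr (Or.inl rfl)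
      have hvz : G.Adj v z := by
        rw [← SimpleGraph.mem_neighborSet, hN]; exact Or.inr (Or.inr rfl)
      by_cases hxy : G.Adj x y <;> by_cases hxz : G.Adj x z <;> by_cases hyz : G.Adj y z
      · exact k4_of_four hvx hvy hvz hxy hxz hyz
      · exact caseC G ih hcard hdeg1 hdeg3 hva hN hxy0 hxz0 hyz0 hxy hxz hyz
      · exact caseC G ih hcard hdeg1 hdeg3 hva (hN.trans (Set.insert_comm x y {z}))
          (Ne.symm hxy0) hyz0 hxz0 hxy.symm hyz hxz
      · exact caseB G ih hcard hdeg1 hdeg3 hva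
          (hN.trans ((congrArg (insert x) (Set.pair_comm y z)).trans (Set.insert_comm x z {y})))
          (Ne.symm hxz0) (Ne.symm hyz0) (fun h => hxz h.symm) (fun h => hyz h.symm)
      · exact caseC G ih hcard hdeg1 hdeg3 hva
          (hN.trans ((congrArg (insert x) (Set.pair_comm y z)).trans (Set.insert_comm x z {y})))
          (Ne.symm hxz0) (Ne.symm hyz0) hxy0 hxz.symm hyz.symm hxy
      · exact caseB G ih hcard hdeg1 hdeg3 hva (hN.trans (Set.insert_comm x y {z}))
          (Ne.symm hxy0) hyz0 (fun h => hxy h.symm) hyz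
      · exact caseB G ih hcard hdeg1 hdeg3 hva hN hxy0 hxz0 hxy hxz
      · exact caseB G ih hcard hdeg1 hdeg3 hva hN hxy0 hxz0 hxy hxz
    · -- all vertices other than a have degree at least 4: contract an edge
      have hdeg4 : ∀ w, w ≠ a → 4 ≤ (G.neighborSet w).ncard := by
        intro w hw
        have h1 := hdeg3 w hw
        have h2 : (G.neighborSet w).ncard ≠ 3 := fun h => hex ⟨w, hw, h⟩
        omega
      obtain ⟨b, hab⟩ := hdeg1
      have hba : b ≠ a := hab.ne'
      obtain ⟨c, hc, c', hc', hcc', hca, hc'a⟩ :=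
        exists_two_diff (Set.toFinite _) (hdeg3 b hba) a
      have hbc : G.Adj b c := hc
      let G' : SimpleGraph {w : W // w ≠ c} :=
        { Adj := fun p q => p ≠ q ∧ (G.Adj ↑p ↑q ∨
            ((p : W) = b ∧ G.Adj c ↑q) ∨ ((q : W) = b ∧ G.Adj ↑p c))
          symm := by
            constructor; rintro p q ⟨h1, h2⟩
            refine ⟨h1.symm, ?_⟩
            rcases h2 with h | h | h
            · exact Or.inl h.symm
            · exact Or.inr (Or.inr ⟨h.1, h.2.symm⟩)
            · exact Or.inr (Or.inl ⟨h.1, h.2.symm⟩)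
          loopless := ⟨fun p h => h.1 rfl⟩ }
      have hane : a ≠ c := Ne.symm hca
      have hdeg1' : ∃ q, G'.Adj ⟨a, hane⟩ q :=
        ⟨⟨b, hbc.ne⟩, svne hab.ne, Or.inl hab⟩
      have hdeg3' : ∀ p, p ≠ (⟨a, hane⟩ : {w : W // w ≠ c}) →
          3 ≤ (G'.neighborSet p).ncard := by
        intro p hpa
        have hpa' : (p : W) ≠ a := fun h => hpa (Subtype.ext h)
        obtain ⟨n1, hn1, n2, hn2, n3, hn3, ⟨h12, h13, h23⟩, e1, e2, e3⟩ :=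
          exists_three_diff (Set.toFinite _) (hdeg4 (p : W) hpa') c
        exact three_nbrs (G' := G') (p := p) (m1 := ⟨n1, e1⟩) (m2 := ⟨n2, e2⟩) (m3 := ⟨n3, e3⟩)
          h12 h13 h23 ⟨svne hn1.ne, Or.inl hn1⟩ ⟨svne hn2.ne, Or.inl hn2⟩
          ⟨svne hn3.ne, Or.inl hn3⟩
      have hK' : K4S G' := ih _ G' ⟨a, hane⟩ (card_del c hcard) hdeg1' hdeg3'
      exact master_del hbc G' (fun p q hpq => hpq.2) hK'

end K4Work

theorem stmt14 {V : Type*} [Fintype V] [Nonempty V] (G : SimpleGraph V) [DecidableRel G.Adj]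
    (h : ¬ HasK4Minor G) : ∃ v : V, G.degree v ≤ 2 := by
  by_contra hcon
  push_neg at hcon
  have hdeg : ∀ w : V, 3 ≤ (G.neighborSet w).ncard := by
    intro w
    have h1 := hcon w
    have he : (G.neighborSet w).ncard = G.degree w := by
      rw [Set.ncard_eq_toFinset_card', Set.toFinset_card,
        SimpleGraph.card_neighborSet_eq_degree]
    omega
  obtain ⟨a⟩ := ‹Nonempty V›
  have h1 : ∃ b, G.Adj a b := by
    have h2 : (G.neighborSet a).Nonempty := by
      apply Set.nonempty_of_ncard_ne_zero
      have := hdeg a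
      omega
    obtain ⟨b, hb⟩ := h2
    exact ⟨b, hb⟩
  exact h ((K4Work.key (Fintype.card V) V G a le_rfl h1 (fun w _ => hdeg w)).hasK4Minor)
end

section
/- Suppose a connected graph H contains cycles C and C' sharing an edge, and a path P meeting C only at one endpoint u and C' only at the other endpoint v, with u ∉ V(C'), v ∉ V(C), and u ≠ v. Then H contains a K_4 minor. -/
open SimpleGraph

namespace K4Aux

variable {V : Type*} {G : SimpleGraph V}

lemma end_mem_support_tail {a b : V} (W : G.Walk a b) (h : ¬W.Nil) :
    b ∈ W.support.tail := by
  cases W with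
  | nil => simp at h
  | cons r W' => simpa using W'.end_mem_support

lemma mem_support_rotate [DecidableEq V] {a b : V} (c : G.Walk a a) (hn : ¬c.Nil) (hb : b ∈ c.support)
    (x : V) : x ∈ (c.rotate b hb).support ↔ x ∈ c.support := by
  have htail := (Walk.support_rotate c b hb).mem_iff (a := x)
  have ha : a ∈ c.support.tail := end_mem_support_tail c hn
  have hb' : b ∈ c.support.tail := by
    rcases (by rwa [Walk.support_eq_cons c, List.mem_cons] at hb : b = a ∨ b ∈ c.support.tail)
      with h | h
    · exact h ▸ ha
    · exact h
  constructor
  · intro hx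
    rcases (by rwa [Walk.support_eq_cons (c.rotate b hb), List.mem_cons] at hx :
        x = b ∨ x ∈ (c.rotate b hb).support.tail) with rfl | hx
    · exact hb
    · exact List.mem_of_mem_tail (htail.mp hx)
  · intro hx
    have hx' : x ∈ c.support.tail := by
      rcases (by rwa [Walk.support_eq_cons c, List.mem_cons] at hx :
          x = a ∨ x ∈ c.support.tail) with rfl | hx
      · exact ha
      · exact hx
    exact List.mem_of_mem_tail (htail.mpr hx')

lemma firstHit [DecidableEq V] {S : Set V} {a b : V} (W : G.Walk a b) (ha : a ∉ S)
    (hb : ∃ w ∈ W.support, w ∈ S) :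
    ∃ c, c ∈ S ∧ ∃ (W1 : G.Walk a c) (W2 : G.Walk c b), W1.append W2 = W ∧
      (∀ w ∈ W1.support, w ∈ S → w = c) ∧ W1.support.count c = 1 := by
  classical
  induction W with
  | nil =>
    obtain ⟨w, hw, hwS⟩ := hb
    rw [Walk.mem_support_nil_iff] at hw
    subst hw
    exact absurd hwS ha
  | @cons t x b r W' ih =>
    by_cases hxS : x ∈ S
    · refine ⟨x, hxS, Walk.cons r Walk.nil, W', rfl, ?_, ?_⟩
      · intro w hw hwS
        simp only [Walk.support_cons, Walk.support_nil, List.mem_cons, List.not_mem_nil,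
          or_false] at hw
        rcases hw with rfl | rfl
        · exact absurd hwS ha
        · rfl
      · have htx : t ≠ x := fun h => ha (h ▸ hxS)
        simp [List.count_cons, htx]
    · have hb' : ∃ w ∈ W'.support, w ∈ S := by
        obtain ⟨w, hw, hwS⟩ := hb
        simp only [Walk.support_cons, List.mem_cons] at hw
        rcases hw with rfl | hw
        · exact absurd hwS ha
        · exact ⟨w, hw, hwS⟩
      obtain ⟨c, hcS, W1, W2, heq, hprop, hcount⟩ := ih hxS hb'
      refine ⟨c, hcS, Walk.cons r W1, W2, by rw [Walk.cons_append, heq], ?_, ?_⟩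
      · intro w hw hwS
        simp only [Walk.support_cons, List.mem_cons] at hw
        rcases hw with rfl | hw
        · exact absurd hwS ha
        · exact hprop w hw hwS
      · have htc : t ≠ c := fun h => ha (h ▸ hcS)
        simpa [List.count_cons, htc] using hcount

lemma trim [DecidableEq V] {a b : V} (hba : a ≠ b) (W : G.Walk a b) (h : W.support.count a = 1) :
    ∃ c, ∃ W' : G.Walk c b, G.Adj a c ∧ a ∉ W'.support ∧
      (∀ x ∈ W'.support, x ∈ W.support) ∧ ∀ x ∈ W.support, x ≠ a → x ∈ W'.support := by
  classical
  cases W with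
  | nil => exact absurd rfl hba
  | @cons t x b r W' =>
    refine ⟨x, W', r, ?_, ?_, ?_⟩
    · intro hmem
      have h' := h
      rw [Walk.support_cons, List.count_cons_self] at h'
      have h0 : W'.support.count a = 0 := by omega
      exact (List.count_eq_zero.mp h0) hmem
    · intro y hy
      simp only [Walk.support_cons, List.mem_cons]
      exact Or.inr hy
    · intro y hy hya
      simp only [Walk.support_cons, List.mem_cons] at hy
      rcases hy with rfl | hy
      · exact absurd rfl hya
      · exact hy

lemma firstBefore [DecidableEq V] {a b : V} (W : G.Walk a b) {p q : V} (hp : p ∈ W.support)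
    (hq : q ∈ W.support) (hpq : p ≠ q) :
    q ∉ (W.takeUntil p hp).support ∨ p ∉ (W.takeUntil q hq).support := by
  induction W with
  | nil =>
    rw [Walk.mem_support_nil_iff] at hp hq
    exact absurd (hp.trans hq.symm) hpq
  | @cons t x b r W' ih =>
    by_cases htp : t = p
    · subst htp
      left
      intro hmem
      have : (Walk.cons r W').takeUntil t hp = Walk.nil := by
        simp [Walk.takeUntil]
      rw [this] at hmem
      simp only [Walk.support_nil, List.mem_singleton] at hmem
      exact hpq hmem.symm
    · by_cases htq : t = q
      · subst htq
        right
        intro hmem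
        have : (Walk.cons r W').takeUntil t hq = Walk.nil := by
          simp [Walk.takeUntil]
        rw [this] at hmem
        simp only [Walk.support_nil, List.mem_singleton] at hmem
        exact hpq hmem
      · have hp' : p ∈ W'.support := by
          rcases (by simpa using hp : p = t ∨ p ∈ W'.support) with h | h
          · exact absurd h.symm htp
          · exact h
        have hq' : q ∈ W'.support := by
          rcases (by simpa using hq : q = t ∨ q ∈ W'.support) with h | h
          · exact absurd h.symm htq
          · exact h
        have e1 : (Walk.cons r W').takeUntil p hp = Walk.cons r (W'.takeUntil p hp') := by
          simp [Walk.takeUntil, htp]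
        have e2 : (Walk.cons r W').takeUntil q hq = Walk.cons r (W'.takeUntil q hq') := by
          simp [Walk.takeUntil, htq]
        rcases ih hp' hq' with h | h
        · left
          rw [e1]
          simp only [Walk.support_cons, List.mem_cons, not_or]
          exact ⟨fun hh => htq hh.symm, h⟩
        · right
          rw [e2]
          simp only [Walk.support_cons, List.mem_cons, not_or]
          exact ⟨fun hh => htp hh.symm, h⟩

lemma exSymm {H1 H2 : G.Subgraph} (h : ∃ a ∈ H1.verts, ∃ b ∈ H2.verts, G.Adj a b) :
    ∃ a ∈ H2.verts, ∃ b ∈ H1.verts, G.Adj a b := by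
  obtain ⟨a, ha, b, hb, hab⟩ := h
  exact ⟨b, hb, a, ha, hab.symm⟩

lemma build [DecidableEq V] {u v p q : V}
    (C1 : G.Walk u u) (hC1 : C1.IsCycle)
    (P : G.Walk u v) (hP : P.IsPath) (huv : u ≠ v)
    (Q1 : G.Walk v p) (Q2 : G.Walk v q)
    (hpu : p ≠ u) (hqu : q ≠ u) (hpq : p ≠ q)
    (hvC : v ∉ C1.support)
    (hp : p ∈ C1.support) (hq : q ∈ C1.support)
    (hqT : q ∉ (C1.takeUntil p hp).support)
    (hPC : ∀ w ∈ P.support, w ∈ C1.support → w = u)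
    (hQ1C : ∀ w ∈ Q1.support, w ∈ C1.support → w = p)
    (hQ2C : ∀ w ∈ Q2.support, w ∈ C1.support → w = q)
    (hQ1c : Q1.support.count p = 1) (hQ2c : Q2.support.count q = 1) :
    HasK4Minor G := by
  classical
  set T1 := C1.takeUntil p hp with hT1def
  set R := C1.dropUntil p hp with hRdef
  have hspec : T1.append R = C1 := C1.take_spec hp
  have hsupC1 : C1.support = T1.support ++ R.support.tail := by
    rw [← hspec, Walk.support_append]
  have hqR : q ∈ R.support.tail := by
    have h := hq
    rw [hsupC1, List.mem_append] at h
    tauto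
  have hqR' : q ∈ R.support := List.mem_of_mem_tail hqR
  set T2 := R.takeUntil q hqR' with hT2def
  set T3 := R.dropUntil q hqR' with hT3def
  have hspec2 : T2.append T3 = R := R.take_spec hqR'
  have hsupR : R.support = T2.support ++ T3.support.tail := by
    rw [← hspec2, Walk.support_append]
  have e1 : R.support.tail = T2.support.tail ++ T3.support.tail := by
    rw [hsupR, List.tail_append_of_ne_nil (Walk.support_ne_nil _)]
  have htailC1 : C1.support.tail = T1.support.tail ++ (T2.support.tail ++ T3.support.tail) := by
    rw [hsupC1, e1, Walk.support_eq_cons T1]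
    rfl
  have hnd := hC1.support_nodup
  rw [htailC1, List.nodup_append'] at hnd
  obtain ⟨nd1, hnd23, hdisj1⟩ := hnd
  rw [List.nodup_append'] at hnd23
  obtain ⟨nd2, nd3, hdisj23⟩ := hnd23
  -- membership facts
  have hT1cons : T1.support = u :: T1.support.tail := Walk.support_eq_cons T1
  have hT2cons : T2.support = p :: T2.support.tail := Walk.support_eq_cons T2
  have hT3cons : T3.support = q :: T3.support.tail := Walk.support_eq_cons T3
  have hpT1t : p ∈ T1.support.tail := by
    have := T1.end_mem_support
    rw [hT1cons, List.mem_cons] at this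
    rcases this with h | h
    · exact absurd h hpu
    · exact h
  have hqT2t : q ∈ T2.support.tail := by
    have := T2.end_mem_support
    rw [hT2cons, List.mem_cons] at this
    rcases this with h | h
    · exact absurd h.symm hpq
    · exact h
  have huT3t : u ∈ T3.support.tail := by
    have := T3.end_mem_support
    rw [hT3cons, List.mem_cons] at this
    rcases this with h | h
    · exact absurd h.symm hqu
    · exact h
  -- counts
  have c1 : T1.support.count p = 1 := C1.count_support_takeUntil_eq_one hp
  have c2 : T2.support.count q = 1 := R.count_support_takeUntil_eq_one hqR'
  have c3 : T3.support.count u = 1 := by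
    rw [hT3cons, List.count_cons_of_ne hqu]
    exact List.count_eq_one_of_mem nd3 huT3t
  -- trims of cycle arcs (remove the endpoint)
  have hc1r : T1.reverse.support.count p = 1 := by
    rw [Walk.support_reverse, List.count_reverse]; exact c1
  obtain ⟨a1, W1, hadj1, hpW1, hW1sub', hW1sup'⟩ := trim hpu T1.reverse hc1r
  have hW1sub : ∀ x ∈ W1.support, x ∈ T1.support := fun x hx => by
    have := hW1sub' x hx
    rwa [Walk.support_reverse, List.mem_reverse] at this
  have huW1 : u ∈ W1.support := W1.end_mem_support
  have hc2r : T2.reverse.support.count q = 1 := by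
    rw [Walk.support_reverse, List.count_reverse]; exact c2
  obtain ⟨a2, W2, hadj2, hqW2, hW2sub', hW2sup'⟩ := trim hpq.symm T2.reverse hc2r
  have hW2sub : ∀ x ∈ W2.support, x ∈ T2.support := fun x hx => by
    have := hW2sub' x hx
    rwa [Walk.support_reverse, List.mem_reverse] at this
  have hpW2 : p ∈ W2.support := W2.end_mem_support
  have hc3r : T3.reverse.support.count u = 1 := by
    rw [Walk.support_reverse, List.count_reverse]; exact c3
  obtain ⟨a3, W3, hadj3, huW3, hW3sub', hW3sup'⟩ := trim (Ne.symm hqu) T3.reverse hc3r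
  have hW3sub : ∀ x ∈ W3.support, x ∈ T3.support := fun x hx => by
    have := hW3sub' x hx
    rwa [Walk.support_reverse, List.mem_reverse] at this
  have hqW3 : q ∈ W3.support := W3.end_mem_support
  -- trims of the connector walks (remove the cycle endpoint)
  have cP : P.support.count u = 1 :=
    List.count_eq_one_of_mem hP.support_nodup P.start_mem_support
  obtain ⟨d0, P0, hadjP, huP0, hP0sub, _⟩ := trim huv P cP
  have hpv : p ≠ v := fun h => hvC (h ▸ hp)
  have hqv : q ≠ v := fun h => hvC (h ▸ hq)
  have hcQ1 : Q1.reverse.support.count p = 1 := by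
    rw [Walk.support_reverse, List.count_reverse]; exact hQ1c
  obtain ⟨d1, Y1, hadjQ1, hpY1, hY1sub', _⟩ := trim hpv Q1.reverse hcQ1
  have hY1sub : ∀ x ∈ Y1.support, x ∈ Q1.support := fun x hx => by
    have := hY1sub' x hx
    rwa [Walk.support_reverse, List.mem_reverse] at this
  have hcQ2 : Q2.reverse.support.count q = 1 := by
    rw [Walk.support_reverse, List.count_reverse]; exact hQ2c
  obtain ⟨d2, Y2, hadjQ2, hqY2, hY2sub', _⟩ := trim hqv Q2.reverse hcQ2
  have hY2sub : ∀ x ∈ Y2.support, x ∈ Q2.support := fun x hx => by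
    have := hY2sub' x hx
    rwa [Walk.support_reverse, List.mem_reverse] at this
  -- subgraphs
  set H1 := W1.toSubgraph with hH1
  set H2 := W2.toSubgraph with hH2
  set H3 := W3.toSubgraph with hH3
  set H4 := P0.toSubgraph ⊔ Y1.toSubgraph ⊔ Y2.toSubgraph with hH4
  have hH4verts : ∀ x, x ∈ H4.verts ↔
      x ∈ P0.support ∨ x ∈ Y1.support ∨ x ∈ Y2.support := by
    intro x
    simp [hH4, Walk.mem_verts_toSubgraph, or_assoc]
  -- C1 support containment of arcs
  have hT1C1 : ∀ x ∈ T1.support, x ∈ C1.support := C1.support_takeUntil_subset hp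
  have hRC1 : ∀ x ∈ R.support, x ∈ C1.support := C1.support_dropUntil_subset hp
  have hT2C1 : ∀ x ∈ T2.support, x ∈ C1.support := fun x hx =>
    hRC1 x (R.support_takeUntil_subset hqR' hx)
  have hT3C1 : ∀ x ∈ T3.support, x ∈ C1.support := fun x hx =>
    hRC1 x (R.support_dropUntil_subset hqR' hx)
  -- H4 avoids the cycle
  have hH4C1 : ∀ x, x ∈ H4.verts → x ∉ C1.support := by
    intro x hx hxC
    rcases (hH4verts x).mp hx with h | h | h
    · exact huP0 ((hPC x (hP0sub x h) hxC) ▸ h)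
    · exact hpY1 ((hQ1C x (hY1sub x h) hxC) ▸ h)
    · exact hqY2 ((hQ2C x (hY2sub x h) hxC) ▸ h)
  -- pairwise disjointness of the arcs
  have D12 : Disjoint H1.verts H2.verts := by
    rw [Set.disjoint_left]
    intro x hx1 hx2
    rw [hH1, Walk.mem_verts_toSubgraph] at hx1
    rw [hH2, Walk.mem_verts_toSubgraph] at hx2
    have hxp : x ≠ p := fun h => hpW1 (h ▸ hx1)
    have hxq : x ≠ q := fun h => hqW2 (h ▸ hx2)
    have hxT1 := hW1sub x hx1
    have hxT2 := hW2sub x hx2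
    rw [hT2cons, List.mem_cons] at hxT2
    rcases hxT2 with h | hxT2t
    · exact hxp h
    rw [hT1cons, List.mem_cons] at hxT1
    rcases hxT1 with rfl | hxT1t
    · exact hdisj23 hxT2t huT3t
    · exact hdisj1 hxT1t (List.mem_append_left _ hxT2t)
  have D13 : Disjoint H1.verts H3.verts := by
    rw [Set.disjoint_left]
    intro x hx1 hx3
    rw [hH1, Walk.mem_verts_toSubgraph] at hx1
    rw [hH3, Walk.mem_verts_toSubgraph] at hx3
    have hxp : x ≠ p := fun h => hpW1 (h ▸ hx1)
    have hxu : x ≠ u := fun h => huW3 (h ▸ hx3)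
    have hxT1 := hW1sub x hx1
    have hxT3 := hW3sub x hx3
    rw [hT3cons, List.mem_cons] at hxT3
    rcases hxT3 with rfl | hxT3t
    · exact hqT hxT1
    rw [hT1cons, List.mem_cons] at hxT1
    rcases hxT1 with h | hxT1t
    · exact hxu h
    · exact hdisj1 hxT1t (List.mem_append_right _ hxT3t)
  have D23 : Disjoint H2.verts H3.verts := by
    rw [Set.disjoint_left]
    intro x hx2 hx3
    rw [hH2, Walk.mem_verts_toSubgraph] at hx2
    rw [hH3, Walk.mem_verts_toSubgraph] at hx3
    have hxq : x ≠ q := fun h => hqW2 (h ▸ hx2)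
    have hxu : x ≠ u := fun h => huW3 (h ▸ hx3)
    have hxT2 := hW2sub x hx2
    have hxT3 := hW3sub x hx3
    rw [hT3cons, List.mem_cons] at hxT3
    rcases hxT3 with h | hxT3t
    · exact hxq h
    rw [hT2cons, List.mem_cons] at hxT2
    rcases hxT2 with rfl | hxT2t
    · exact hdisj1 hpT1t (List.mem_append_right _ hxT3t)
    · exact hdisj23 hxT2t hxT3t
  have D14 : Disjoint H1.verts H4.verts := by
    rw [Set.disjoint_left]
    intro x hx1 hx4
    rw [hH1, Walk.mem_verts_toSubgraph] at hx1
    exact hH4C1 x hx4 (hT1C1 x (hW1sub x hx1))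
  have D24 : Disjoint H2.verts H4.verts := by
    rw [Set.disjoint_left]
    intro x hx2 hx4
    rw [hH2, Walk.mem_verts_toSubgraph] at hx2
    exact hH4C1 x hx4 (hT2C1 x (hW2sub x hx2))
  have D34 : Disjoint H3.verts H4.verts := by
    rw [Set.disjoint_left]
    intro x hx3 hx4
    rw [hH3, Walk.mem_verts_toSubgraph] at hx3
    exact hH4C1 x hx4 (hT3C1 x (hW3sub x hx3))
  -- vertex memberships
  have hu1 : u ∈ H1.verts := W1.end_mem_verts_toSubgraph
  have ha1 : a1 ∈ H1.verts := W1.start_mem_verts_toSubgraph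
  have hp2 : p ∈ H2.verts := W2.end_mem_verts_toSubgraph
  have ha2 : a2 ∈ H2.verts := W2.start_mem_verts_toSubgraph
  have hq3 : q ∈ H3.verts := W3.end_mem_verts_toSubgraph
  have ha3 : a3 ∈ H3.verts := W3.start_mem_verts_toSubgraph
  have hv4 : v ∈ H4.verts := (hH4verts v).mpr (Or.inl P0.end_mem_support)
  have hd0 : d0 ∈ H4.verts := (hH4verts d0).mpr (Or.inl P0.start_mem_support)
  have hd1 : d1 ∈ H4.verts := (hH4verts d1).mpr (Or.inr (Or.inl Y1.start_mem_support))
  have hd2 : d2 ∈ H4.verts := (hH4verts d2).mpr (Or.inr (Or.inr Y2.start_mem_support))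
  -- connectivity
  have hconn1 : H1.Connected := W1.toSubgraph_connected
  have hconn2 : H2.Connected := W2.toSubgraph_connected
  have hconn3 : H3.Connected := W3.toSubgraph_connected
  have hconn4 : H4.Connected := by
    rw [hH4]
    apply Subgraph.connected_sup
    · apply (Subgraph.connected_sup P0.toSubgraph_connected.preconnected Y1.toSubgraph_connected.preconnected ?_).preconnected
      exact ⟨v, P0.end_mem_verts_toSubgraph, Y1.end_mem_verts_toSubgraph⟩
    · exact Y2.toSubgraph_connected.preconnected
    · exact ⟨v, Or.inl P0.end_mem_verts_toSubgraph, Y2.end_mem_verts_toSubgraph⟩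
  -- adjacency witnesses
  have A12 : ∃ a ∈ H1.verts, ∃ b ∈ H2.verts, G.Adj a b := ⟨a1, ha1, p, hp2, hadj1.symm⟩
  have A13 : ∃ a ∈ H1.verts, ∃ b ∈ H3.verts, G.Adj a b := ⟨u, hu1, a3, ha3, hadj3⟩
  have A23 : ∃ a ∈ H2.verts, ∃ b ∈ H3.verts, G.Adj a b := ⟨a2, ha2, q, hq3, hadj2.symm⟩
  have A14 : ∃ a ∈ H1.verts, ∃ b ∈ H4.verts, G.Adj a b := ⟨u, hu1, d0, hd0, hadjP⟩
  have A24 : ∃ a ∈ H2.verts, ∃ b ∈ H4.verts, G.Adj a b := ⟨p, hp2, d1, hd1, hadjQ1⟩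
  have A34 : ∃ a ∈ H3.verts, ∃ b ∈ H4.verts, G.Adj a b := ⟨q, hq3, d2, hd2, hadjQ2⟩
  refine ⟨![H1, H2, H3, H4], ?_, ?_, ?_, ?_⟩
  · intro i
    fin_cases i
    · exact ⟨u, hu1⟩
    · exact ⟨p, hp2⟩
    · exact ⟨q, hq3⟩
    · exact ⟨v, hv4⟩
  · intro i
    fin_cases i
    · exact hconn1
    · exact hconn2
    · exact hconn3
    · exact hconn4
  · intro i j hij
    fin_cases i <;> fin_cases j <;>
      first
        | exact absurd rfl hij
        | exact D12 | exact D13 | exact D14 | exact D23 | exact D24 | exact D34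
        | exact D12.symm | exact D13.symm | exact D14.symm
        | exact D23.symm | exact D24.symm | exact D34.symm
  · have S12 := exSymm A12
    have S13 := exSymm A13
    have S14 := exSymm A14
    have S23 := exSymm A23
    have S24 := exSymm A24
    have S34 := exSymm A34
    intro i j hij
    fin_cases i <;> fin_cases j <;>
      first
        | exact absurd rfl hij
        | exact A12 | exact A13 | exact A14 | exact A23 | exact A24 | exact A34
        | exact S12 | exact S13 | exact S14 | exact S23 | exact S24 | exact S34

end K4Aux

theorem stmt19 {V : Type*} (H : SimpleGraph V) (hconn : H.Connected)
    (a a' u v : V) (C : H.Walk a a) (C' : H.Walk a' a')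
    (hC : C.IsCycle) (hC' : C'.IsCycle) (hshare : ∃ e, e ∈ C.edges ∧ e ∈ C'.edges)
    (P : H.Walk u v) (hP : P.IsPath) (huv : u ≠ v)
    (huC' : u ∉ C'.support) (hvC : v ∉ C.support)
    (hPC : ∀ w ∈ P.support, w ∈ C.support ↔ w = u)
    (hPC' : ∀ w ∈ P.support, w ∈ C'.support ↔ w = v) :
    HasK4Minor H := by
  classical
  obtain ⟨e, heC, heC'⟩ := hshare
  revert heC heC'
  refine Sym2.ind (fun x y => ?_) e
  intro heC heC'
  have hxC : x ∈ C.support := C.fst_mem_support_of_mem_edges heC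
  have hyC : y ∈ C.support := C.snd_mem_support_of_mem_edges heC
  have hxC' : x ∈ C'.support := C'.fst_mem_support_of_mem_edges heC'
  have hxy : x ≠ y := (H.mem_edgeSet.mp (C.edges_subset_edgeSet heC)).ne
  have hyC' : y ∈ C'.support := C'.snd_mem_support_of_mem_edges heC'
  have hu : u ∈ C.support := (hPC u P.start_mem_support).mpr rfl
  have hv' : v ∈ C'.support := (hPC' v P.end_mem_support).mpr rfl
  set S : Set V := {w | w ∈ C.support} with hSdef
  have hvS : v ∉ S := hvC
  -- rotate C' at v
  set C2 := C'.rotate v hv' with hC2def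
  have hC2 : C2.IsCycle := hC'.rotate hv'
  have memC2 : ∀ x, x ∈ C2.support ↔ x ∈ C'.support :=
    K4Aux.mem_support_rotate C' hC'.not_nil hv'
  -- first attachment point
  obtain ⟨p, hpS, Q1, R1, hQR1, hQ1S, hc1⟩ :=
    K4Aux.firstHit (S := S) C2 hvS ⟨x, (memC2 x).mpr hxC', hxC⟩
  -- second attachment point, from the other side
  obtain ⟨q, hqS, Q2, R2, hQR2, hQ2S, hc2⟩ :=
    K4Aux.firstHit (S := S) R1.reverse hvS ⟨p, R1.reverse.end_mem_support, hpS⟩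
  have hsupC2 : C2.support = Q1.support ++ R1.support.tail := by
    rw [← hQR1, Walk.support_append]
  have hsupR1r : R1.reverse.support = Q2.support ++ R2.support.tail := by
    rw [← hQR2, Walk.support_append]
  have hpC2 : p ∈ C2.support := by
    rw [hsupC2]
    exact List.mem_append_left _ Q1.end_mem_support
  have hQ1C2 : ∀ w ∈ Q1.support, w ∈ C2.support := fun w hw => by
    rw [hsupC2]; exact List.mem_append_left _ hw
  have hR1C2 : ∀ w ∈ R1.support, w ∈ C2.support := fun w hw => by
    rw [Walk.support_eq_cons R1, List.mem_cons] at hw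
    rcases hw with rfl | hw
    · exact hpC2
    · rw [hsupC2]; exact List.mem_append_right _ hw
  have hQ2C2 : ∀ w ∈ Q2.support, w ∈ C2.support := fun w hw => by
    apply hR1C2
    rw [← List.mem_reverse, ← Walk.support_reverse]
    rw [hsupR1r]
    exact List.mem_append_left _ hw
  have hpv : p ≠ v := fun h => hvS (h ▸ hpS)
  have hqv : q ≠ v := fun h => hvS (h ▸ hqS)
  -- p ≠ q
  have hpq : p ≠ q := by
    intro hpq
    subst hpq
    have hnd2 := hC2.support_nodup
    have hpC2t : p ∈ C2.support.tail := by
      have := hpC2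
      rw [Walk.support_eq_cons C2, List.mem_cons] at this
      rcases this with h | h
      · exact absurd h hpv
      · exact h
    have hcountC2 : C2.support.count p = 1 := by
      rw [Walk.support_eq_cons C2, List.count_cons_of_ne hpv.symm]
      exact List.count_eq_one_of_mem hnd2 hpC2t
    have hcntR1t : R1.support.tail.count p = 0 := by
      have h := hcountC2
      rw [hsupC2, List.count_append, hc1] at h
      omega
    have hcntR1r : R1.reverse.support.count p = 1 := by
      rw [Walk.support_reverse, List.count_reverse, Walk.support_eq_cons R1,
        List.count_cons_self, hcntR1t]
    have hcntR2t : R2.support.tail.count p = 0 := by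
      have h := hcntR1r
      rw [hsupR1r, List.count_append, hc2] at h
      omega
    have hR2nil : R2.Nil := by
      by_contra hn
      have hmem := K4Aux.end_mem_support_tail R2 hn
      rw [List.count_eq_zero] at hcntR2t
      exact hcntR2t hmem
    have hsupR2 : R2.support = [p] := Walk.nil_iff_support_eq.mp hR2nil
    have hsub : ∀ w ∈ C2.support, w ∈ S → w = p := by
      intro w hw hwS
      rw [hsupC2, List.mem_append] at hw
      rcases hw with hw | hw
      · exact hQ1S w hw hwS
      · have hwR1 : w ∈ R1.reverse.support := by
          rw [Walk.support_reverse, List.mem_reverse]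
          exact List.mem_of_mem_tail hw
        rw [hsupR1r, hsupR2] at hwR1
        simp only [List.tail_cons, List.append_nil] at hwR1
        exact hQ2S w hwR1 hwS
    exact hxy ((hsub x ((memC2 x).mpr hxC') hxC).trans
      (hsub y ((memC2 y).mpr hyC') hyC).symm)
  -- move to the cycle C rotated at u
  set C1 := C.rotate u hu with hC1def
  have hC1 : C1.IsCycle := hC.rotate hu
  have memC1 : ∀ x, x ∈ C1.support ↔ x ∈ C.support :=
    K4Aux.mem_support_rotate C hC.not_nil hu
  have hp1 : p ∈ C1.support := (memC1 p).mpr hpS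
  have hq1 : q ∈ C1.support := (memC1 q).mpr hqS
  have hpu : p ≠ u := by
    intro h
    apply huC'
    rw [← (memC2 u)]
    exact h ▸ (hQ1C2 p Q1.end_mem_support)
  have hqu : q ≠ u := by
    intro h
    apply huC'
    rw [← (memC2 u)]
    exact h ▸ (hQ2C2 q Q2.end_mem_support)
  have hvC1 : v ∉ C1.support := fun h => hvC ((memC1 v).mp h)
  have hPC1 : ∀ w ∈ P.support, w ∈ C1.support → w = u := fun w hw hwc =>
    (hPC w hw).mp ((memC1 w).mp hwc)
  have hQ1C1 : ∀ w ∈ Q1.support, w ∈ C1.support → w = p := fun w hw hwc =>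
    hQ1S w hw ((memC1 w).mp hwc)
  have hQ2C1 : ∀ w ∈ Q2.support, w ∈ C1.support → w = q := fun w hw hwc =>
    hQ2S w hw ((memC1 w).mp hwc)
  rcases K4Aux.firstBefore C1 hp1 hq1 hpq with hw | hw
  · exact K4Aux.build C1 hC1 P hP huv Q1 Q2 hpu hqu hpq hvC1 hp1 hq1 hw
      hPC1 hQ1C1 hQ2C1 hc1 hc2
  · exact K4Aux.build C1 hC1 P hP huv Q2 Q1 hqu hpu (Ne.symm hpq) hvC1 hq1 hp1 hw
      hPC1 hQ2C1 hQ1C1 hc2 hc1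
end
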